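/- arXiv:1605.02898 — 7 statements merged into one kernel-verified Lean document; each statement's English description precedes it below -/
import Mathlib

section
/- Let 𝔽 be a field of characteristic 0, g = gl_N(𝔽), f^{pr} = Σ_{i=1}^{N−1} e_{i+1,i} the principal nilpotent, n₊ ⊂ gl_N the subalgebra of strictly upper triangular matrices, and I ⊂ U(gl_N) the left ideal generated by {m − tr(f^{pr}m) : m ∈ n₊}. Let F^{pr} = Σ_{i=1}^{N−1} E_{i+1,i} ∈ Mat_{N×N}(𝔽) and π₋E = Σ_{1≤i≤j≤N} e_{ji} E_{ij}. Then for every constant matrix D ∈ Mat_{N×N}(𝔽): rdet(E + D) − rdet(F^{pr} + π₋E + D) ∈ I. (Equivalently, ρ(rdet(E+D)) = rdet(π₋E + F^{pr} + D), where ρ : U(gl_N) → U(gl_N)/I composed with the identification of the quotient with U(b₋).) -/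
attribute [local instance] LieRing.ofAssociativeRing

/-- The row determinant of a square matrix over a (possibly noncommutative) unital ring:
`rdet A = Σ_{σ ∈ S_N} sign(σ) A_{1σ(1)} A_{2σ(2)} ⋯ A_{Nσ(N)}`, with the factors multiplied
in order of increasing row index. -/
noncomputable def rdet {R : Type*} [Ring R] {N : ℕ} (A : Matrix (Fin N) (Fin N) R) : R :=
  ∑ σ : Equiv.Perm (Fin N),
    (Equiv.Perm.sign σ : ℤ) • (List.ofFn fun i => A i (σ i)).prod

/-- The matrix `E ∈ Mat_{N×N}(U(gl_N))`: its `(i,j)` entry is the elementary matrix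
`e_{ji} ∈ gl_N` viewed in `U(gl_N)`. -/
noncomputable def Emat (𝔽 : Type*) [Field 𝔽] (N : ℕ) :
    Matrix (Fin N) (Fin N) (UniversalEnvelopingAlgebra 𝔽 (Matrix (Fin N) (Fin N) 𝔽)) :=
  fun i j => UniversalEnvelopingAlgebra.ι 𝔽 (Matrix.single j i (1 : 𝔽))

/-- `π₋E = Σ_{i≤j} e_{ji}E_{ij}`: the entrywise projection of `E` onto the lower triangular
subalgebra `b₋` (the `(i,j)` entry is kept iff `i ≤ j`). -/
noncomputable def piMinusE (𝔽 : Type*) [Field 𝔽] (N : ℕ) :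
    Matrix (Fin N) (Fin N) (UniversalEnvelopingAlgebra 𝔽 (Matrix (Fin N) (Fin N) 𝔽)) :=
  fun i j => if i ≤ j then Emat 𝔽 N i j else 0

/-- `F^{pr} = Σ_{i=1}^{N−1} E_{i+1,i} ∈ Mat_{N×N}(𝔽)`, the matrix of the principal nilpotent
`f^{pr} = Σ_{i=1}^{N−1} e_{i+1,i}`. -/
def Fpr (𝔽 : Type*) [Field 𝔽] (N : ℕ) : Matrix (Fin N) (Fin N) 𝔽 :=
  fun i j => if (i : ℕ) = (j : ℕ) + 1 then 1 else 0

/-- The left ideal `I ⊂ U(gl_N)` generated by `{m − tr(f^{pr}·m) : m ∈ n₊}`, where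
`n₊` is the subalgebra of strictly upper triangular matrices. -/
noncomputable def Ipr (𝔽 : Type*) [Field 𝔽] (N : ℕ) :
    Ideal (UniversalEnvelopingAlgebra 𝔽 (Matrix (Fin N) (Fin N) 𝔽)) :=
  Ideal.span {x | ∃ m : Matrix (Fin N) (Fin N) 𝔽,
    (∀ i j : Fin N, j ≤ i → m i j = 0) ∧
    x = UniversalEnvelopingAlgebra.ι 𝔽 m -
      algebraMap 𝔽 (UniversalEnvelopingAlgebra 𝔽 (Matrix (Fin N) (Fin N) 𝔽))
        (Matrix.trace (Fpr 𝔽 N * m))}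

/-! ### Auxiliary material -/

section Aux

/-- Splitting a product over `Fin n` at position `k`, for two functions agreeing off `k`. -/
lemma prod_sub_prod {R : Type*} [Ring R] {n : ℕ} (f g : Fin n → R) (k : Fin n)
    (h : ∀ i, i ≠ k → f i = g i) :
    (List.ofFn f).prod - (List.ofFn g).prod =
      ((List.ofFn f).take k).prod * ((f k - g k) * ((List.ofFn f).drop (k + 1)).prod) := by
  have hsplit : ∀ F : Fin n → R, (List.ofFn F).prod =
      ((List.ofFn F).take k).prod * (F k * ((List.ofFn F).drop (k + 1)).prod) := by
    intro F
    rw [← List.prod_take_mul_prod_drop (List.ofFn F) (k + 1),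
      List.prod_take_succ _ _ (by simp), List.getElem_ofFn, mul_assoc]
  have htake : (List.ofFn g).take (k : ℕ) = (List.ofFn f).take (k : ℕ) := by
    apply List.ext_getElem (by simp)
    intro i h1 h2
    simp only [List.getElem_take, List.getElem_ofFn]
    refine (h _ ?_).symm
    have hik : i < (k : ℕ) := by simpa using h1
    exact Fin.ne_of_lt (by rw [Fin.lt_def]; simpa using hik)
  have hdrop : (List.ofFn g).drop ((k : ℕ) + 1) = (List.ofFn f).drop ((k : ℕ) + 1) := by
    apply List.ext_getElem (by simp)
    intro i h1 h2
    simp only [List.getElem_drop, List.getElem_ofFn]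
    refine (h _ ?_).symm
    have : (k : ℕ) < (k : ℕ) + 1 + i := by omega
    exact Fin.ne_of_gt (by rw [Fin.lt_def]; simpa using this)
  rw [hsplit f, hsplit g, htake, hdrop, ← mul_sub, ← sub_mul]

variable {𝔽 : Type*} [Field 𝔽] {N : ℕ}

lemma iota_comm (m m' : Matrix (Fin N) (Fin N) 𝔽) (h1 : m * m' = 0) (h2 : m' * m = 0) :
    Commute (UniversalEnvelopingAlgebra.ι 𝔽 m) (UniversalEnvelopingAlgebra.ι 𝔽 m') := by
  have h := (UniversalEnvelopingAlgebra.ι 𝔽).map_lie m m'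
  rw [Ring.lie_def, Ring.lie_def, h1, h2, sub_zero, map_zero] at h
  exact sub_eq_zero.mp h.symm

lemma trace_mul_std (F : Matrix (Fin N) (Fin N) 𝔽) (j k : Fin N) :
    Matrix.trace (F * Matrix.single j k 1) = F k j := by
  simp [Matrix.trace, Matrix.mul_apply, Matrix.single, Matrix.diag, ite_and,
    Finset.sum_ite_eq, Finset.sum_ite_eq']

/-- The generator `e_{jk} - tr(F^{pr} e_{jk})` of the ideal, for `j < k`. -/
lemma gen_mem (j k : Fin N) (hjk : (j : ℕ) < (k : ℕ)) :
    Emat 𝔽 N k j -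
      algebraMap 𝔽 (UniversalEnvelopingAlgebra 𝔽 (Matrix (Fin N) (Fin N) 𝔽)) (Fpr 𝔽 N k j)
      ∈ Ipr 𝔽 N := by
  apply Ideal.subset_span
  refine ⟨Matrix.single j k 1, ?_, ?_⟩
  · intro a b hba
    simp only [Matrix.single, Matrix.of_apply]
    split
    · rename_i hcase
      exfalso
      obtain ⟨ha, hb⟩ := hcase
      subst ha; subst hb
      exact absurd hba (by simpa using Fin.not_le.mpr (Fin.lt_def.mpr hjk))
    · rfl
  · rw [trace_mul_std]
    rfl

noncomputable def BmatD (𝔽 : Type*) [Field 𝔽] {N : ℕ} (D : Matrix (Fin N) (Fin N) 𝔽) :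
    Matrix (Fin N) (Fin N) (UniversalEnvelopingAlgebra 𝔽 (Matrix (Fin N) (Fin N) 𝔽)) :=
  (Fpr 𝔽 N).map (algebraMap 𝔽 (UniversalEnvelopingAlgebra 𝔽 (Matrix (Fin N) (Fin N) 𝔽))) +
    piMinusE 𝔽 N +
    D.map (algebraMap 𝔽 (UniversalEnvelopingAlgebra 𝔽 (Matrix (Fin N) (Fin N) 𝔽)))

noncomputable def AmatD (𝔽 : Type*) [Field 𝔽] {N : ℕ} (D : Matrix (Fin N) (Fin N) 𝔽) :
    Matrix (Fin N) (Fin N) (UniversalEnvelopingAlgebra 𝔽 (Matrix (Fin N) (Fin N) 𝔽)) :=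
  Emat 𝔽 N +
    D.map (algebraMap 𝔽 (UniversalEnvelopingAlgebra 𝔽 (Matrix (Fin N) (Fin N) 𝔽)))

noncomputable def MkD (𝔽 : Type*) [Field 𝔽] {N : ℕ} (D : Matrix (Fin N) (Fin N) 𝔽) (k : ℕ) :
    Matrix (Fin N) (Fin N) (UniversalEnvelopingAlgebra 𝔽 (Matrix (Fin N) (Fin N) 𝔽)) :=
  fun i j => if (i : ℕ) < k then AmatD 𝔽 D i j else BmatD 𝔽 D i j

/-- The generator commutes with all entries of `B` in strictly lower rows. -/
lemma commute_gen (D : Matrix (Fin N) (Fin N) 𝔽) (j kk i c : Fin N) (s : 𝔽)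
    (hj : (j : ℕ) < (kk : ℕ)) (hi : (kk : ℕ) < (i : ℕ)) :
    Commute (Emat 𝔽 N kk j -
        algebraMap 𝔽 (UniversalEnvelopingAlgebra 𝔽 (Matrix (Fin N) (Fin N) 𝔽)) s)
      (BmatD 𝔽 D i c) := by
  apply Commute.sub_left
  swap
  · exact Algebra.commute_algebraMap_left _ _
  simp only [BmatD, Matrix.add_apply, Matrix.map_apply, piMinusE]
  apply Commute.add_right
  apply Commute.add_right
  · exact Algebra.commute_algebraMap_right _ _
  · split
    · rename_i hic
      refine iota_comm _ _ ?_ ?_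
      · refine Matrix.single_mul_single_of_ne _ _ _ _ ?_ _
        intro hkc
        have : (kk : ℕ) < (c : ℕ) := lt_of_lt_of_le hi (by exact_mod_cast hic)
        exact absurd (congrArg Fin.val hkc) (by omega)
      · refine Matrix.single_mul_single_of_ne _ _ _ _ ?_ _
        intro hij
        exact absurd (congrArg Fin.val hij) (by omega)
    · exact Commute.zero_right _
  · exact Algebra.commute_algebraMap_right _ _

lemma step_mem (D : Matrix (Fin N) (Fin N) 𝔽) (k : ℕ) (hk : k < N) :
    rdet (MkD 𝔽 D (k + 1)) - rdet (MkD 𝔽 D k) ∈ Ipr 𝔽 N := by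
  set kk : Fin N := ⟨k, hk⟩ with hkk
  rw [rdet, rdet, ← Finset.sum_sub_distrib]
  apply Ideal.sum_mem
  intro σ _
  rw [← smul_sub]
  apply zsmul_mem
  have hrow : ∀ i : Fin N, i ≠ kk →
      MkD 𝔽 D (k + 1) i (σ i) = MkD 𝔽 D k i (σ i) := by
    intro i hi
    have : (i : ℕ) ≠ k := fun h => hi (Fin.ext h)
    simp only [MkD]
    by_cases h' : (i : ℕ) < k
    · rw [if_pos (by omega), if_pos h']
    · rw [if_neg (by omega), if_neg h']
  rw [prod_sub_prod _ _ kk hrow]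
  -- the middle difference
  have hX : MkD 𝔽 D (k + 1) kk (σ kk) = AmatD 𝔽 D kk (σ kk) := by
    simp [MkD, hkk]
  have hY : MkD 𝔽 D k kk (σ kk) = BmatD 𝔽 D kk (σ kk) := by
    simp [MkD, hkk]
  rw [hX, hY]
  by_cases hc : (σ kk : ℕ) < k
  · -- strictly lower entry: difference is a generator
    have hdiff : AmatD 𝔽 D kk (σ kk) - BmatD 𝔽 D kk (σ kk) =
        Emat 𝔽 N kk (σ kk) -
          algebraMap 𝔽 (UniversalEnvelopingAlgebra 𝔽 (Matrix (Fin N) (Fin N) 𝔽))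
            (Fpr 𝔽 N kk (σ kk)) := by
      have hns : ¬ kk ≤ σ kk := by
        rw [Fin.not_le, Fin.lt_def]; simpa [hkk] using hc
      simp only [AmatD, BmatD, Matrix.add_apply, Matrix.map_apply, piMinusE, if_neg hns]
      abel
    rw [hdiff]
    set g := Emat 𝔽 N kk (σ kk) -
        algebraMap 𝔽 (UniversalEnvelopingAlgebra 𝔽 (Matrix (Fin N) (Fin N) 𝔽))
          (Fpr 𝔽 N kk (σ kk)) with hg
    have hQ : Commute g (((List.ofFn fun i => MkD 𝔽 D (k + 1) i (σ i)).drop (k + 1)).prod) := by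
      apply Commute.list_prod_right
      intro x hx
      obtain ⟨t, ht, hxe⟩ := List.mem_iff_getElem.mp hx
      rw [List.getElem_drop, List.getElem_ofFn] at hxe
      subst hxe
      have hlen : t < N - (k + 1) := by simpa using ht
      have hgt : k < ((⟨k + 1 + t, by omega⟩ : Fin N) : ℕ) := by simp only [Fin.val_mk]; omega
      have : MkD 𝔽 D (k + 1) ⟨k + 1 + t, by omega⟩ (σ ⟨k + 1 + t, by omega⟩) =
          BmatD 𝔽 D ⟨k + 1 + t, by omega⟩ (σ ⟨k + 1 + t, by omega⟩) := by
        simp only [MkD]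
        rw [if_neg (by omega)]
      rw [this]
      exact commute_gen D (σ kk) kk _ _ _ hc (by simpa [hkk] using hgt)
    rw [hQ.eq, ← mul_assoc]
    exact Ideal.mul_mem_left _ _ (gen_mem (σ kk) kk hc)
  · -- entry on or above the diagonal: difference vanishes
    have hzero : AmatD 𝔽 D kk (σ kk) - BmatD 𝔽 D kk (σ kk) = 0 := by
      have hle : kk ≤ σ kk := by
        rw [Fin.le_def]; simpa [hkk] using Nat.le_of_not_lt hc
      have hF : Fpr 𝔽 N kk (σ kk) = 0 := by
        simp only [Fpr]
        rw [if_neg (by have := Fin.le_def.mp hle; simp [hkk] at this ⊢; omega)]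
      simp only [AmatD, BmatD, Matrix.add_apply, Matrix.map_apply, piMinusE, if_pos hle, hF,
        map_zero]
      abel
    rw [hzero]
    simp

end Aux

/-- for `g = gl_N` with principal nilpotent `f^{pr}`, and for every constant
matrix `D ∈ Mat_{N×N}(𝔽)`:
`rdet(E + D) − rdet(F^{pr} + π₋E + D) ∈ I`, i.e. `ρ(rdet(E+D)) = rdet(π₋E + F^{pr} + D)`. -/
theorem stmt_4 {𝔽 : Type*} [Field 𝔽] [CharZero 𝔽] {N : ℕ} (D : Matrix (Fin N) (Fin N) 𝔽) :
    rdet (Emat 𝔽 N +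
        D.map (algebraMap 𝔽 (UniversalEnvelopingAlgebra 𝔽 (Matrix (Fin N) (Fin N) 𝔽)))) -
      rdet ((Fpr 𝔽 N).map
          (algebraMap 𝔽 (UniversalEnvelopingAlgebra 𝔽 (Matrix (Fin N) (Fin N) 𝔽))) +
        piMinusE 𝔽 N +
        D.map (algebraMap 𝔽 (UniversalEnvelopingAlgebra 𝔽 (Matrix (Fin N) (Fin N) 𝔽))))
      ∈ Ipr 𝔽 N := by
  have hA : MkD 𝔽 D N = AmatD 𝔽 D := by
    funext i j
    simp [MkD, i.isLt]
  have hB : MkD 𝔽 D 0 = BmatD 𝔽 D := by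
    funext i j
    simp [MkD]
  have tel : rdet (AmatD 𝔽 D) - rdet (BmatD 𝔽 D) =
      ∑ k ∈ Finset.range N, (rdet (MkD 𝔽 D (k + 1)) - rdet (MkD 𝔽 D k)) := by
    rw [Finset.sum_range_sub (fun k => rdet (MkD 𝔽 D k)), hA, hB]
  have : rdet (AmatD 𝔽 D) - rdet (BmatD 𝔽 D) ∈ Ipr 𝔽 N := by
    rw [tel]
    exact Ideal.sum_mem _ fun k hk => step_mem D k (Finset.mem_range.mp hk)
  simpa [AmatD, BmatD] using this
end

section
/- Let U be a unital associative algebra over a field 𝔽 of characteristic 0, Z ⊆ U its center, and let A(z) ∈ Mat_{M×N}(U((z^{−1}))) be an operator of Yangian type. Then: (a) for any matrices J ∈ Mat_{P×M}(Z) and I ∈ Mat_{N×Q}(Z), the matrix J·A(z)·I ∈ Mat_{P×Q}(U((z^{−1}))) is an operator of Yangian type; (b) if M = N and A(z) is invertible in Mat_{N×N}(U((z^{−1}))), then A(z)^{−1} is an operator of Yangian type with respect to the opposite product of U (i.e., the Yangian identity holds for A^{−1} with all products taken in U^{op}). -/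
/-- A matrix `A(z)` with entries in `U((z⁻¹))` (formal Laurent series in `z⁻¹`, realized as
`LaurentSeries U = HahnSeries ℤ U` in the variable `t = z⁻¹`, so that `(A i j).coeff n` is the
coefficient of `z^{−n}` in `A_{ij}(z)`) is an *operator of Yangian type* for the associative
algebra `U` if `(z−w)[A_{ij}(z), A_{hk}(w)] = A_{hj}(w)A_{ik}(z) − A_{hj}(z)A_{ik}(w)` holds,
i.e. coefficient-wise: for all `m n : ℤ`,
`[a_{ij,m+1}, a_{hk,n}] − [a_{ij,m}, a_{hk,n+1}] = a_{hj,n} a_{ik,m} − a_{hj,m} a_{ik,n}`,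
where `a_{ij,m} = (A i j).coeff m` and `[x,y] = xy − yx`. -/
def IsYangianType {U : Type*} [Ring U] {M N : Type*}
    (A : Matrix M N (LaurentSeries U)) : Prop :=
  ∀ (i h : M) (j k : N) (m n : ℤ),
    ((A i j).coeff (m + 1) * (A h k).coeff n - (A h k).coeff n * (A i j).coeff (m + 1)) -
      ((A i j).coeff m * (A h k).coeff (n + 1) - (A h k).coeff (n + 1) * (A i j).coeff m) =
    (A h j).coeff n * (A i k).coeff m - (A h j).coeff m * (A i k).coeff n

/-- The same identity, with all products taken in the opposite algebra `U^op`
(so `[x,y]^op = yx − xy` and `x ∘ y = y x`). -/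
def IsYangianTypeOp {U : Type*} [Ring U] {M N : Type*}
    (A : Matrix M N (LaurentSeries U)) : Prop :=
  ∀ (i h : M) (j k : N) (m n : ℤ),
    ((A h k).coeff n * (A i j).coeff (m + 1) - (A i j).coeff (m + 1) * (A h k).coeff n) -
      ((A h k).coeff (n + 1) * (A i j).coeff m - (A i j).coeff m * (A h k).coeff (n + 1)) =
    (A i k).coeff m * (A h j).coeff n - (A i k).coeff n * (A h j).coeff m

namespace Stmt5Aux

open Finset

/-! ### Generalities on sums and central elements -/

lemma sum_swap13 {ι₁ ι₂ ι₃ ι₄ : Type*} [Fintype ι₁] [Fintype ι₂] [Fintype ι₃] [Fintype ι₄]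
    {R : Type*} [AddCommMonoid R] (f : ι₁ → ι₂ → ι₃ → ι₄ → R) :
    (∑ a, ∑ b, ∑ c, ∑ d, f a b c d) = ∑ c, ∑ b, ∑ a, ∑ d, f a b c d := by
  calc (∑ a, ∑ b, ∑ c, ∑ d, f a b c d)
      = ∑ b, ∑ a, ∑ c, ∑ d, f a b c d := Finset.sum_comm
    _ = ∑ b, ∑ c, ∑ a, ∑ d, f a b c d :=
        Finset.sum_congr rfl fun b _ => Finset.sum_comm
    _ = ∑ c, ∑ b, ∑ a, ∑ d, f a b c d := Finset.sum_comm

lemma sum_swap_pairs {ι₁ ι₂ ι₃ ι₄ : Type*} [Fintype ι₁] [Fintype ι₂] [Fintype ι₃] [Fintype ι₄]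
    {R : Type*} [AddCommMonoid R] (f : ι₁ → ι₂ → ι₃ → ι₄ → R) :
    (∑ a, ∑ b, ∑ c, ∑ d, f a b c d) = ∑ c, ∑ d, ∑ a, ∑ b, f a b c d := by
  calc (∑ a, ∑ b, ∑ c, ∑ d, f a b c d)
      = ∑ a, ∑ c, ∑ b, ∑ d, f a b c d :=
        Finset.sum_congr rfl fun a _ => Finset.sum_comm
    _ = ∑ c, ∑ a, ∑ b, ∑ d, f a b c d := Finset.sum_comm
    _ = ∑ c, ∑ a, ∑ d, ∑ b, f a b c d :=
        Finset.sum_congr rfl fun c _ => Finset.sum_congr rfl fun a _ => Finset.sum_comm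
    _ = ∑ c, ∑ d, ∑ a, ∑ b, f a b c d :=
        Finset.sum_congr rfl fun c _ => Finset.sum_comm

lemma cent_pull {R : Type*} [Ring R] {α β γ δ : R}
    (hβ : ∀ x, x * β = β * x) (hγ : ∀ x, x * γ = γ * x)
    (hδ : ∀ x, x * δ = δ * x) (u v : R) :
    (α * u * β) * (γ * v * δ) = (α * β * γ * δ) * (u * v) := by
  have h1 : α * u * β = α * β * u := by rw [mul_assoc, hβ u, ← mul_assoc]
  have h2 : γ * v * δ = γ * δ * v := by rw [mul_assoc, hδ v, ← mul_assoc]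
  have hγδ : ∀ x, x * (γ * δ) = (γ * δ) * x := fun x => by
    rw [← mul_assoc, hγ, mul_assoc, hδ, ← mul_assoc]
  rw [h1, h2]
  calc ((α * β) * u) * ((γ * δ) * v)
      = (α * β) * ((u * (γ * δ)) * v) := by simp only [mul_assoc]
    _ = (α * β) * (((γ * δ) * u) * v) := by rw [hγδ]
    _ = (α * β * γ * δ) * (u * v) := by simp only [mul_assoc]

lemma coeff_sum {Γ V : Type*} [PartialOrder Γ] [AddCommMonoid V] {κ : Type*}
    (s : Finset κ) (f : κ → HahnSeries Γ V) (r : Γ) :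
    (∑ x ∈ s, f x).coeff r = ∑ x ∈ s, (f x).coeff r := by
  classical
  induction s using Finset.induction with
  | empty => simp
  | insert _ _ hx ih => rw [Finset.sum_insert hx, Finset.sum_insert hx, HahnSeries.coeff_add, ih]

/-! ### Two-variable Laurent series -/

variable {V : Type*} [Ring V]

lemma zshift_left (y : HahnSeries ℤ V) (m : ℤ) :
    ((HahnSeries.single (-1 : ℤ) (1 : V)) * y).coeff m = y.coeff (m + 1) := by
  have := HahnSeries.coeff_single_mul_add (r := (1 : V)) (x := y) (a := m + 1) (b := (-1 : ℤ))
  simpa using this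

lemma zshift_right (y : HahnSeries ℤ V) (m : ℤ) :
    (y * (HahnSeries.single (-1 : ℤ) (1 : V))).coeff m = y.coeff (m + 1) := by
  have := HahnSeries.coeff_mul_single_add (r := (1 : V)) (x := y) (a := m + 1) (b := (-1 : ℤ))
  simpa using this

/-- the embedding `f ↦ f(w)` of one-variable series into two-variable series:
the outer variable is `w⁻¹`, coefficients mapped by `C`. -/
noncomputable def ew : HahnSeries ℤ V →+* HahnSeries ℤ (HahnSeries ℤ V) where
  toFun x := x.map (HahnSeries.C : V →+* HahnSeries ℤ V)
  map_zero' := by ext; simp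
  map_one' := by
    ext g
    by_cases h : g = 0 <;> simp [h, HahnSeries.coeff_one]
  map_add' x y := by
    ext g
    simp only [HahnSeries.map_coeff, HahnSeries.coeff_add, map_add]
  map_mul' x y :=
    HahnSeries.map_mul (R := V) (S := HahnSeries ℤ V)
      ((HahnSeries.C : V →+* HahnSeries ℤ V) : V →ₙ+* HahnSeries ℤ V)

lemma ew_coeff (x : HahnSeries ℤ V) (n : ℤ) :
    (ew x).coeff n = HahnSeries.C (x.coeff n) := rfl

/-- `z - w` as a two-variable series: outer variable is `w⁻¹`, inner is `z⁻¹`. -/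
noncomputable def sElt (V : Type*) [Ring V] : HahnSeries ℤ (HahnSeries ℤ V) :=
  HahnSeries.C (HahnSeries.single (-1 : ℤ) (1 : V)) -
    HahnSeries.single (-1 : ℤ) (1 : HahnSeries ℤ V)

lemma sElt_mul_coeff (X : HahnSeries ℤ (HahnSeries ℤ V)) (m n : ℤ) :
    ((sElt V * X).coeff n).coeff m = (X.coeff n).coeff (m + 1) - (X.coeff (n + 1)).coeff m := by
  rw [sElt, sub_mul _ _ X, HahnSeries.coeff_sub, HahnSeries.coeff_sub]
  rw [HahnSeries.C_apply, HahnSeries.coeff_single_zero_mul, zshift_left, zshift_left]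

lemma mul_sElt_coeff (X : HahnSeries ℤ (HahnSeries ℤ V)) (m n : ℤ) :
    ((X * sElt V).coeff n).coeff m = (X.coeff n).coeff (m + 1) - (X.coeff (n + 1)).coeff m := by
  rw [sElt, mul_sub X _ _, HahnSeries.coeff_sub, HahnSeries.coeff_sub]
  rw [HahnSeries.C_apply, HahnSeries.coeff_mul_single_zero, zshift_right, zshift_right]

lemma sElt_comm (X : HahnSeries ℤ (HahnSeries ℤ V)) : sElt V * X = X * sElt V := by
  ext n m
  rw [sElt_mul_coeff, mul_sElt_coeff]

lemma ez_mul_ew_coeff (f g : HahnSeries ℤ V) (m n : ℤ) :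
    ((HahnSeries.C f * ew g).coeff n).coeff m = f.coeff m * g.coeff n := by
  rw [HahnSeries.C_apply, HahnSeries.coeff_single_zero_mul, ew_coeff,
    HahnSeries.C_apply, HahnSeries.coeff_mul_single_zero]

lemma ew_mul_ez_coeff (f g : HahnSeries ℤ V) (m n : ℤ) :
    ((ew g * HahnSeries.C f).coeff n).coeff m = g.coeff n * f.coeff m := by
  rw [HahnSeries.C_apply, HahnSeries.coeff_mul_single_zero, ew_coeff,
    HahnSeries.C_apply, HahnSeries.coeff_single_zero_mul]

/-- the series-level form of the Yangian identity. -/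
lemma yangian_series {U : Type*} [Ring U] {M N : Type*}
    {A : Matrix M N (LaurentSeries U)} (hA : IsYangianType A) (c a : M) (d b : N) :
    sElt U * (HahnSeries.C (A c d) * ew (A a b) - ew (A a b) * HahnSeries.C (A c d))
      = ew (A a d) * HahnSeries.C (A c b) - HahnSeries.C (A a d) * ew (A c b) := by
  ext n m
  simp only [sElt_mul_coeff, HahnSeries.coeff_sub, ez_mul_ew_coeff, ew_mul_ez_coeff]
  exact hA c a d b m n

/-! ### Matrices of matrices -/

variable {ι : Type*} [Fintype ι] [DecidableEq ι] {R : Type*} [Ring R]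

/-- `M ⊗ 1` : the matrix `M` in the outer index, identity in the inner index. -/
def tld (M : Matrix ι ι R) : Matrix ι ι (Matrix ι ι R) :=
  M.map (Matrix.scalar ι)

/-- `1 ⊗ M` : identity in the outer index, `M` in the inner index. -/
def hat (M : Matrix ι ι R) : Matrix ι ι (Matrix ι ι R) :=
  Matrix.diagonal fun _ => M

/-- the permutation operator. -/
def Pmat (ι R : Type*) [Fintype ι] [DecidableEq ι] [Ring R] : Matrix ι ι (Matrix ι ι R) :=
  Matrix.of fun i j => Matrix.single j i 1

lemma tld_mul (M N : Matrix ι ι R) : tld M * tld N = tld (M * N) :=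
  (Matrix.map_mul (f := Matrix.scalar ι)).symm

lemma tld_one : tld (1 : Matrix ι ι R) = 1 :=
  Matrix.map_one _ (map_zero _) (map_one _)

lemma hat_mul (M N : Matrix ι ι R) : hat M * hat N = hat (M * N) := by
  simp [hat, Matrix.diagonal_mul_diagonal]

omit [Fintype ι] in
lemma hat_one : hat (1 : Matrix ι ι R) = 1 := by
  simp [hat, Matrix.diagonal_one]

lemma hat_mul_tld_apply (M N : Matrix ι ι R) (i j h k : ι) :
    (hat M * tld N) i j h k = M h k * N i j := by
  rw [hat, tld, Matrix.diagonal_mul, Matrix.map_apply, Matrix.scalar_apply,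
    Matrix.mul_diagonal]

lemma tld_mul_hat_apply (M N : Matrix ι ι R) (i j h k : ι) :
    (tld M * hat N) i j h k = M i j * N h k := by
  rw [tld, hat, Matrix.mul_diagonal, Matrix.map_apply, Matrix.scalar_apply,
    Matrix.diagonal_mul]

lemma mul_P_apply (X : Matrix ι ι (Matrix ι ι R)) (i j h k : ι) :
    (X * Pmat ι R) i j h k = X i k h j := by
  simp only [Matrix.mul_apply, Pmat, Matrix.of_apply, Matrix.sum_apply,
    Matrix.single, Matrix.mul_apply, ite_and, mul_ite, mul_one, mul_zero]
  rw [Finset.sum_comm]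
  simp [Finset.sum_ite_eq, Finset.sum_ite_eq']

lemma P_mul_apply (X : Matrix ι ι (Matrix ι ι R)) (i j h k : ι) :
    (Pmat ι R * X) i j h k = X h j i k := by
  simp only [Matrix.mul_apply, Pmat, Matrix.of_apply, Matrix.sum_apply,
    Matrix.single, Matrix.mul_apply, ite_and, ite_mul, one_mul, zero_mul]
  simp [Finset.sum_ite_eq, Finset.sum_ite_eq']

lemma P_mul_hat (M : Matrix ι ι R) : Pmat ι R * hat M = tld M * Pmat ι R := by
  ext i j h k
  rw [P_mul_apply, mul_P_apply]
  by_cases hc : h = j <;>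
    simp [hat, tld, Matrix.diagonal_apply, Matrix.scalar_apply, Matrix.map_apply, hc]

lemma P_mul_tld (M : Matrix ι ι R) : Pmat ι R * tld M = hat M * Pmat ι R := by
  ext i j h k
  rw [P_mul_apply, mul_P_apply]
  by_cases hc : i = k <;>
    simp [hat, tld, Matrix.diagonal_apply, Matrix.scalar_apply, Matrix.map_apply, hc]

lemma hat_scalar_comm {s : R} (hs : ∀ x : R, s * x = x * s)
    (X : Matrix ι ι (Matrix ι ι R)) :
    hat (Matrix.scalar ι s) * X = X * hat (Matrix.scalar ι s) := by
  ext i j h k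
  rw [hat, Matrix.diagonal_mul, Matrix.mul_diagonal, Matrix.scalar_apply,
    Matrix.diagonal_mul, Matrix.mul_diagonal]
  exact hs _

lemma hat_scalar_mul_apply (s : R) (X : Matrix ι ι (Matrix ι ι R)) (i j h k : ι) :
    (hat (Matrix.scalar ι s) * X) i j h k = s * X i j h k := by
  rw [hat, Matrix.diagonal_mul, Matrix.scalar_apply, Matrix.diagonal_mul]

/-! ### The abstract inversion argument -/

lemma chain {R' : Type*} [Ring R'] {a₁ b₁ a₂ b₂ c d f g p σ : R'}
    (h1 : a₁ * b₁ = 1) (h1' : b₁ * a₁ = 1) (h2 : a₂ * b₂ = 1) (h2' : b₂ * a₂ = 1)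
    (hdf : d * f = 1) (hcg : c * g = 1)
    (hσ : ∀ x, σ * x = x * σ)
    (hp1 : p * b₁ = g * p) (hp2 : p * b₂ = f * p)
    (H : σ * (a₁ * a₂ - a₂ * a₁) = (a₂ * a₁ - c * d) * p) :
    σ * (b₂ * b₁ - b₁ * b₂) = (b₁ * b₂ - f * g) * p := by
  have k1 : ∀ x, b₁ * (a₁ * x) = x := fun x => by rw [← mul_assoc, h1', one_mul]
  have k2 : ∀ x, b₂ * (a₂ * x) = x := fun x => by rw [← mul_assoc, h2', one_mul]
  have kdf : ∀ x, d * (f * x) = x := fun x => by rw [← mul_assoc, hdf, one_mul]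
  have kcg : ∀ x, c * (g * x) = x := fun x => by rw [← mul_assoc, hcg, one_mul]
  have hp2' : ∀ x, p * (b₂ * x) = f * (p * x) := fun x => by
    rw [← mul_assoc, hp2, mul_assoc]
  have t1 : b₁ * b₂ * (a₂ * a₁) * (b₂ * b₁) = b₂ * b₁ := by
    simp only [mul_assoc]
    rw [k2, k1]
  have t2 : b₁ * b₂ * (a₁ * a₂) * (b₂ * b₁) = b₁ * b₂ := by
    simp only [mul_assoc]
    rw [show a₂ * (b₂ * b₁) = b₁ by rw [← mul_assoc, h2, one_mul], h1, mul_one]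
  have e1 : b₂ * b₁ - b₁ * b₂ = b₁ * b₂ * (a₂ * a₁ - a₁ * a₂) * (b₂ * b₁) := by
    rw [mul_sub (b₁ * b₂) (a₂ * a₁) (a₁ * a₂), sub_mul _ _ (b₂ * b₁), t1, t2]
  have e2 : σ * (a₂ * a₁ - a₁ * a₂) = (c * d - a₂ * a₁) * p := by
    calc σ * (a₂ * a₁ - a₁ * a₂) = -(σ * (a₁ * a₂ - a₂ * a₁)) := by
          rw [← mul_neg σ _, neg_sub]
      _ = -((a₂ * a₁ - c * d) * p) := by rw [H]
      _ = (c * d - a₂ * a₁) * p := by rw [← neg_mul, neg_sub]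
  have e3 : σ * (b₂ * b₁ - b₁ * b₂)
      = b₁ * b₂ * ((c * d - a₂ * a₁) * p) * (b₂ * b₁) := by
    rw [e1, ← e2]
    calc σ * (b₁ * b₂ * (a₂ * a₁ - a₁ * a₂) * (b₂ * b₁))
        = b₁ * b₂ * (a₂ * a₁ - a₁ * a₂) * (b₂ * b₁) * σ := hσ _
      _ = b₁ * b₂ * ((a₂ * a₁ - a₁ * a₂) * ((b₂ * b₁) * σ)) := by
          simp only [mul_assoc]
      _ = b₁ * b₂ * ((a₂ * a₁ - a₁ * a₂) * (σ * (b₂ * b₁))) := by rw [← hσ]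
      _ = b₁ * b₂ * (((a₂ * a₁ - a₁ * a₂) * σ) * (b₂ * b₁)) := by
          simp only [mul_assoc]
      _ = b₁ * b₂ * ((σ * (a₂ * a₁ - a₁ * a₂)) * (b₂ * b₁)) := by rw [← hσ]
      _ = b₁ * b₂ * (σ * (a₂ * a₁ - a₁ * a₂)) * (b₂ * b₁) := by
          simp only [mul_assoc]
  rw [e3]
  have u1 : b₁ * b₂ * (c * d * p) * (b₂ * b₁) = b₁ * (b₂ * p) := by
    simp only [mul_assoc]
    rw [hp2', hp1, kdf, kcg]
  have u2 : b₁ * b₂ * (a₂ * a₁ * p) * (b₂ * b₁) = f * (g * p) := by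
    simp only [mul_assoc]
    rw [hp2', hp1, k2, k1]
  calc b₁ * b₂ * ((c * d - a₂ * a₁) * p) * (b₂ * b₁)
      = b₁ * b₂ * (c * d * p - a₂ * a₁ * p) * (b₂ * b₁) := by
        rw [sub_mul (c * d) (a₂ * a₁) p]
    _ = b₁ * b₂ * (c * d * p) * (b₂ * b₁) - b₁ * b₂ * (a₂ * a₁ * p) * (b₂ * b₁) := by
        rw [mul_sub (b₁ * b₂) _ _, sub_mul _ _ (b₂ * b₁)]
    _ = b₁ * (b₂ * p) - f * (g * p) := by rw [u1, u2]
    _ = (b₁ * b₂ - f * g) * p := by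
        rw [sub_mul (b₁ * b₂) (f * g) p]
        simp only [mul_assoc]

/-! ### Part (a) -/

theorem partA {U : Type*} [Ring U] {M N P Q : ℕ}
    (A : Matrix (Fin M) (Fin N) (LaurentSeries U)) (hA : IsYangianType A)
    (J : Matrix (Fin P) (Fin M) U) (I : Matrix (Fin N) (Fin Q) U)
    (hJ : ∀ p m, J p m ∈ Subring.center U) (hI : ∀ n q, I n q ∈ Subring.center U) :
    IsYangianType
      (J.map (HahnSeries.C : U →+* HahnSeries ℤ U) * A *
        I.map (HahnSeries.C : U →+* HahnSeries ℤ U)) := by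
  intro i h j k m n
  have coeffB : ∀ (p : Fin P) (q : Fin Q) (r : ℤ),
      ((J.map (HahnSeries.C : U →+* HahnSeries ℤ U) * A *
        I.map (HahnSeries.C : U →+* HahnSeries ℤ U)) p q).coeff r
      = ∑ s, ∑ t, J p s * (A s t).coeff r * I t q := by
    intro p q r
    have h1 : (J.map (HahnSeries.C : U →+* HahnSeries ℤ U) * A *
        I.map (HahnSeries.C : U →+* HahnSeries ℤ U)) p q
        = ∑ t, ∑ s, HahnSeries.C (J p s) * A s t * HahnSeries.C (I t q) := by
      rw [Matrix.mul_apply]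
      refine Finset.sum_congr rfl fun t _ => ?_
      rw [Matrix.mul_apply, Finset.sum_mul]
      refine Finset.sum_congr rfl fun s _ => ?_
      rw [Matrix.map_apply, Matrix.map_apply]
    rw [h1, coeff_sum]
    refine Eq.trans (Finset.sum_congr rfl fun t _ => ?_) Finset.sum_comm
    rw [coeff_sum]
    refine Finset.sum_congr rfl fun s _ => ?_
    rw [HahnSeries.C_apply, HahnSeries.C_apply, HahnSeries.coeff_mul_single_zero,
      HahnSeries.coeff_single_zero_mul]
  have hb : ∀ (p : Fin P) (q : Fin Q) (r : ℤ) (p' : Fin P) (q' : Fin Q) (r' : ℤ),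
      ((J.map (HahnSeries.C : U →+* HahnSeries ℤ U) * A *
        I.map (HahnSeries.C : U →+* HahnSeries ℤ U)) p q).coeff r *
      ((J.map (HahnSeries.C : U →+* HahnSeries ℤ U) * A *
        I.map (HahnSeries.C : U →+* HahnSeries ℤ U)) p' q').coeff r'
      = ∑ s, ∑ t, ∑ s', ∑ t',
          (J p s * (A s t).coeff r * I t q) * (J p' s' * (A s' t').coeff r' * I t' q') := by
    intro p q r p' q' r'
    rw [coeffB, coeffB, Finset.sum_mul]
    refine Finset.sum_congr rfl fun s _ => ?_
    rw [Finset.sum_mul]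
    refine Finset.sum_congr rfl fun t _ => ?_
    rw [Finset.mul_sum]
    refine Finset.sum_congr rfl fun s' _ => ?_
    rw [Finset.mul_sum]
  simp only [hb]
  -- reorder the summation variables in four of the six sums
  rw [show (∑ s, ∑ t, ∑ s', ∑ t',
        (J h s * (A s t).coeff n * I t k) * (J i s' * (A s' t').coeff (m + 1) * I t' j))
      = ∑ s, ∑ t, ∑ s', ∑ t',
        (J h s' * (A s' t').coeff n * I t' k) * (J i s * (A s t).coeff (m + 1) * I t j) from
    sum_swap_pairs _]
  rw [show (∑ s, ∑ t, ∑ s', ∑ t',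
        (J h s * (A s t).coeff (n + 1) * I t k) * (J i s' * (A s' t').coeff m * I t' j))
      = ∑ s, ∑ t, ∑ s', ∑ t',
        (J h s' * (A s' t').coeff (n + 1) * I t' k) * (J i s * (A s t).coeff m * I t j) from
    sum_swap_pairs _]
  rw [show (∑ s, ∑ t, ∑ s', ∑ t',
        (J h s * (A s t).coeff n * I t j) * (J i s' * (A s' t').coeff m * I t' k))
      = ∑ s, ∑ t, ∑ s', ∑ t',
        (J h s' * (A s' t).coeff n * I t j) * (J i s * (A s t').coeff m * I t' k) from
    sum_swap13 _]
  rw [show (∑ s, ∑ t, ∑ s', ∑ t',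
        (J h s * (A s t).coeff m * I t j) * (J i s' * (A s' t').coeff n * I t' k))
      = ∑ s, ∑ t, ∑ s', ∑ t',
        (J h s' * (A s' t).coeff m * I t j) * (J i s * (A s t').coeff n * I t' k) from
    sum_swap13 _]
  simp only [← Finset.sum_sub_distrib]
  refine Finset.sum_congr rfl fun s _ => ?_
  refine Finset.sum_congr rfl fun t _ => ?_
  refine Finset.sum_congr rfl fun s' _ => ?_
  refine Finset.sum_congr rfl fun t' _ => ?_
  -- pointwise identity
  have hα : ∀ x, x * J i s = J i s * x := Subring.mem_center_iff.mp (hJ i s)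
  have hβ : ∀ x, x * I t j = I t j * x := Subring.mem_center_iff.mp (hI t j)
  have hγ : ∀ x, x * J h s' = J h s' * x := Subring.mem_center_iff.mp (hJ h s')
  have hδ : ∀ x, x * I t' k = I t' k * x := Subring.mem_center_iff.mp (hI t' k)
  have hE1 : J h s' * I t' k * (J i s) * (I t j) = J i s * I t j * (J h s') * (I t' k) := by
    rw [hα (J h s' * I t' k), mul_assoc (J i s) _ (I t j), hβ (J h s' * I t' k)]
    simp only [mul_assoc]
  have hE2 : J h s' * I t j * (J i s) * (I t' k) = J i s * I t j * (J h s') * (I t' k) := by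
    rw [hα (J h s' * I t j), mul_assoc (J i s) _ (I t' k)]
    rw [show J h s' * I t j = I t j * J h s' from hβ (J h s')]
    simp only [mul_assoc]
  rw [cent_pull hβ hγ hδ, cent_pull hδ hα hβ, cent_pull hβ hγ hδ, cent_pull hδ hα hβ,
    cent_pull hβ hα hδ, cent_pull hβ hα hδ, hE1, hE2]
  rw [← mul_sub, ← mul_sub, ← mul_sub, ← mul_sub]
  rw [hA s s' t t' m n]

/-! ### Part (b) -/

theorem partB {U : Type*} [Ring U] {N' : ℕ}
    (A : Matrix (Fin N') (Fin N') (LaurentSeries U))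
    (hA : IsYangianType A) (hU : IsUnit A) : IsYangianTypeOp (Ring.inverse A) := by
  set B : Matrix (Fin N') (Fin N') (LaurentSeries U) := Ring.inverse A with hB
  have hAB : A * B = 1 := Ring.mul_inverse_cancel A hU
  have hBA : B * A = 1 := Ring.inverse_mul_cancel A hU
  -- images of A and B in the two-variable world
  set Az := A.map (HahnSeries.C : HahnSeries ℤ U →+* HahnSeries ℤ (HahnSeries ℤ U)) with hAz
  set Bz := B.map (HahnSeries.C : HahnSeries ℤ U →+* HahnSeries ℤ (HahnSeries ℤ U)) with hBz
  set Aw := A.map (ew : HahnSeries ℤ U →+* HahnSeries ℤ (HahnSeries ℤ U)) with hAw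
  set Bw := B.map (ew : HahnSeries ℤ U →+* HahnSeries ℤ (HahnSeries ℤ U)) with hBw
  have hmap : ∀ (X Y : Matrix (Fin N') (Fin N') (LaurentSeries U))
      (f : HahnSeries ℤ U →+* HahnSeries ℤ (HahnSeries ℤ U)), X * Y = 1 →
      X.map f * Y.map f = 1 := by
    intro X Y f hXY
    rw [← Matrix.map_mul, hXY, Matrix.map_one f (map_zero f) (map_one f)]
  have hAzBz : Az * Bz = 1 := hmap A B _ hAB
  have hBzAz : Bz * Az = 1 := hmap B A _ hBA
  have hAwBw : Aw * Bw = 1 := hmap A B _ hAB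
  have hBwAw : Bw * Aw = 1 := hmap B A _ hBA
  -- hypotheses of the chain lemma
  have h1 : tld Az * tld Bz = 1 := by rw [tld_mul, hAzBz, tld_one]
  have h1' : tld Bz * tld Az = 1 := by rw [tld_mul, hBzAz, tld_one]
  have h2 : hat Aw * hat Bw = 1 := by rw [hat_mul, hAwBw, hat_one]
  have h2' : hat Bw * hat Aw = 1 := by rw [hat_mul, hBwAw, hat_one]
  have hdf : tld Aw * tld Bw = 1 := by rw [tld_mul, hAwBw, tld_one]
  have hcg : hat Az * hat Bz = 1 := by rw [hat_mul, hAzBz, hat_one]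
  have hσ : ∀ X : Matrix (Fin N') (Fin N')
      (Matrix (Fin N') (Fin N') (HahnSeries ℤ (HahnSeries ℤ U))),
      hat (Matrix.scalar (Fin N') (sElt U)) * X = X * hat (Matrix.scalar (Fin N') (sElt U)) :=
    hat_scalar_comm (fun x => sElt_comm (V := U) x)
  have hp1 : Pmat (Fin N') (HahnSeries ℤ (HahnSeries ℤ U)) * tld Bz
      = hat Bz * Pmat (Fin N') (HahnSeries ℤ (HahnSeries ℤ U)) := P_mul_tld Bz
  have hp2 : Pmat (Fin N') (HahnSeries ℤ (HahnSeries ℤ U)) * hat Bw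
      = tld Bw * Pmat (Fin N') (HahnSeries ℤ (HahnSeries ℤ U)) := P_mul_hat Bw
  have H : hat (Matrix.scalar (Fin N') (sElt U)) * (tld Az * hat Aw - hat Aw * tld Az)
      = (hat Aw * tld Az - hat Az * tld Aw) * Pmat (Fin N') (HahnSeries ℤ (HahnSeries ℤ U)) := by
    refine Matrix.ext fun i j => Matrix.ext fun h k => ?_
    rw [hat_scalar_mul_apply, mul_P_apply]
    rw [Matrix.sub_apply, Matrix.sub_apply, Matrix.sub_apply, Matrix.sub_apply,
      tld_mul_hat_apply, hat_mul_tld_apply, hat_mul_tld_apply, hat_mul_tld_apply]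
    simp only [hAz, hAw, Matrix.map_apply]
    exact yangian_series hA i h j k
  have key := chain
    (R' := Matrix (Fin N') (Fin N') (Matrix (Fin N') (Fin N') (HahnSeries ℤ (HahnSeries ℤ U))))
    h1 h1' h2 h2' hdf hcg hσ hp1 hp2 H
  have key2 : ∀ (i h j k : Fin N'),
      sElt U * (ew (B h k) * HahnSeries.C (B i j) - HahnSeries.C (B i j) * ew (B h k))
      = HahnSeries.C (B i k) * ew (B h j) - ew (B i k) * HahnSeries.C (B h j) := by
    intro i h j k
    have e := congrArg (fun X => X i j h k) key
    simp only [hat_scalar_mul_apply, mul_P_apply, Matrix.sub_apply,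
      hat_mul_tld_apply, tld_mul_hat_apply, hBz, hBw, Matrix.map_apply] at e
    exact e
  intro i h j k m n
  have e := congrArg (fun X => (X.coeff n).coeff m) (key2 i h j k)
  simp only [sElt_mul_coeff, HahnSeries.coeff_sub, ew_mul_ez_coeff, ez_mul_ew_coeff] at e
  exact e



end Stmt5Aux

/-- Let `U` be a unital associative algebra over a field `𝔽` of characteristic 0,
`Z ⊆ U` its center, and `A(z) ∈ Mat_{M×N}(U((z⁻¹)))` an operator of Yangian type. Then:
(a) for matrices `J ∈ Mat_{P×M}(Z)` and `I ∈ Mat_{N×Q}(Z)` with central entries, the matrix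
`J·A(z)·I` is an operator of Yangian type;
(b) if `M = N` and `A(z)` is invertible in `Mat_{N×N}(U((z⁻¹)))`, then `A(z)⁻¹` is an operator
of Yangian type with respect to the opposite product of `U`. -/
theorem stmt_5 {𝔽 : Type*} [Field 𝔽] [CharZero 𝔽] {U : Type*} [Ring U] [Algebra 𝔽 U] :
    (∀ (M N P Q : ℕ) (A : Matrix (Fin M) (Fin N) (LaurentSeries U)),
      IsYangianType A →
      ∀ (J : Matrix (Fin P) (Fin M) U) (I : Matrix (Fin N) (Fin Q) U),
        (∀ p m, J p m ∈ Subring.center U) →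
        (∀ n q, I n q ∈ Subring.center U) →
        IsYangianType
          (J.map (HahnSeries.C : U →+* HahnSeries ℤ U) * A *
            I.map (HahnSeries.C : U →+* HahnSeries ℤ U))) ∧
    (∀ (N : ℕ) (A : Matrix (Fin N) (Fin N) (LaurentSeries U)),
      IsYangianType A → IsUnit A → IsYangianTypeOp (Ring.inverse A)) := by
  constructor
  · intro M N P Q A hA J I hJ hI
    exact Stmt5Aux.partA A hA J I hJ hI
  · intro N A hA hU
    exact Stmt5Aux.partB A hA hU
end

section
/- Let U be a unital associative algebra over a field 𝔽 of characteristic 0, and let A(z) ∈ Mat_{N×N}(U((z^{−1}))) be an operator of Yangian type which is invertible in Mat_{N×N}(U((z^{−1}))). Then for all i,j,h,k ∈ {1,…,N}: (z−w)[A_{ij}(z), (A^{−1})_{hk}(w)] = −δ_{hj} Σ_{t=1}^N A_{it}(z)(A^{−1})_{tk}(w) + δ_{ik} Σ_{t=1}^N (A^{−1})_{ht}(w)A_{tj}(z), an identity of formal Laurent series in the two independent commuting variables z and w. -/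
open HahnSeries Matrix

lemma coeff_sum' {U : Type*} [Ring U] {α : Type*} (s : Finset α)
    (f : α → LaurentSeries U) (n : ℤ) :
    (∑ x ∈ s, f x).coeff n = ∑ x ∈ s, (f x).coeff n :=
  map_sum (AddMonoidHom.mk' (fun x : LaurentSeries U => x.coeff n)
    (fun _ _ => HahnSeries.coeff_add)) f s

lemma shift_coeff {U : Type*} [Ring U] (C : LaurentSeries U) (n : ℤ) :
    ((single (-1 : ℤ) (1 : U)) * C).coeff n = C.coeff (n + 1) := by
  have : ((single (-1 : ℤ) (1 : U)) * C).coeff ((n+1) + (-1)) = 1 * C.coeff (n+1) :=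
    coeff_single_mul_add
  simpa using this

lemma shift_comm {U : Type*} [Ring U] (C : LaurentSeries U) :
    (single (-1 : ℤ) (1 : U)) * C = C * (single (-1 : ℤ) (1 : U)) := by
  ext n
  rw [shift_coeff]
  have : (C * (single (-1 : ℤ) (1 : U))).coeff ((n+1) + (-1)) = C.coeff (n+1) * 1 :=
    coeff_mul_single_add
  simpa using this.symm



/-- Let `U` be a unital associative algebra over a field `𝔽` of characteristic 0
and `A(z) ∈ Mat_{N×N}(U((z⁻¹)))` an invertible operator of Yangian type. Then
`(z−w)[A_{ij}(z), (A⁻¹)_{hk}(w)] = −δ_{hj} Σ_t A_{it}(z)(A⁻¹)_{tk}(w)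
  + δ_{ik} Σ_t (A⁻¹)_{ht}(w)A_{tj}(z)`,
stated coefficient-wise in the two independent commuting variables `z, w` (coefficient of
`z^{−m} w^{−n}`). -/
theorem stmt_7 {𝔽 : Type*} [Field 𝔽] [CharZero 𝔽] {U : Type*} [Ring U] [Algebra 𝔽 U]
    {N : ℕ} (A : Matrix (Fin N) (Fin N) (LaurentSeries U))
    (hA : IsYangianType A) (hAinv : IsUnit A)
    (i j h k : Fin N) (m n : ℤ) :
    ((A i j).coeff (m + 1) * (Ring.inverse A h k).coeff n -
        (Ring.inverse A h k).coeff n * (A i j).coeff (m + 1)) -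
      ((A i j).coeff m * (Ring.inverse A h k).coeff (n + 1) -
        (Ring.inverse A h k).coeff (n + 1) * (A i j).coeff m) =
    -(if h = j then (1 : U) else 0) *
        (∑ t : Fin N, (A i t).coeff m * (Ring.inverse A t k).coeff n) +
      (if i = k then (1 : U) else 0) *
        (∑ t : Fin N, (Ring.inverse A h t).coeff n * (A t j).coeff m) := by
  classical
  set B := Ring.inverse A with hBdef
  have hAB : A * B = 1 := Ring.mul_inverse_cancel A hAinv
  have hBA : B * A = 1 := Ring.inverse_mul_cancel A hAinv
  set u : LaurentSeries U := single 0 ((A i j).coeff (m+1)) with hu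
  set v : LaurentSeries U := single 0 ((A i j).coeff m) with hv
  set s : LaurentSeries U := single (-1 : ℤ) (1 : U) with hs
  set Us : Matrix (Fin N) (Fin N) (LaurentSeries U) := Matrix.diagonal (fun _ => u) with hUs
  set Vs : Matrix (Fin N) (Fin N) (LaurentSeries U) := Matrix.diagonal (fun _ => v) with hVs
  set Sc : Matrix (Fin N) (Fin N) (LaurentSeries U) := Matrix.diagonal (fun _ => s) with hSc
  set P : Matrix (Fin N) (Fin N) (LaurentSeries U) :=
    fun b k' => if b = j then single 0 ((A i k').coeff m) else 0 with hP
  set Q : Matrix (Fin N) (Fin N) (LaurentSeries U) :=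
    fun h' a => if a = i then single 0 ((A h' j).coeff m) else 0 with hQ
  -- Sc commutes with every matrix
  have hScomm : ∀ M : Matrix (Fin N) (Fin N) (LaurentSeries U), Sc * M = M * Sc := by
    intro M
    apply Matrix.ext
    intro a b
    simp only [hSc, Matrix.diagonal_mul, Matrix.mul_diagonal, hs]
    rw [shift_comm]
  -- the Yangian relation, in matrix form
  have hLA : Us * A - A * Us - (Vs * (Sc * A) - (Sc * A) * Vs) = A * P - Q * A := by
    apply Matrix.ext
    intro a b
    have e1 : (A * P) a b = A a j * HahnSeries.single 0 ((A i b).coeff m) := by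
      simp only [Matrix.mul_apply]
      simp [hP, mul_ite, mul_zero]
    have e2 : (Q * A) a b = HahnSeries.single 0 ((A a j).coeff m) * A i b := by
      simp only [Matrix.mul_apply]
      simp [hQ, ite_mul, zero_mul]
    simp only [Matrix.sub_apply]
    rw [e1, e2]
    simp only [hUs, hVs, hSc, Matrix.diagonal_mul, Matrix.mul_diagonal]
    ext n'
    simp only [HahnSeries.coeff_sub, hu, hv, hs]
    simp only [HahnSeries.coeff_single_zero_mul, HahnSeries.coeff_mul_single_zero, shift_coeff]
    exact hA i a j b m n'
  -- algebraic step: L(B) = -B * L(A) * B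
  have hLB : Us * B - B * Us - (Vs * (Sc * B) - (Sc * B) * Vs)
      = -(B * (Us * A - A * Us - (Vs * (Sc * A) - (Sc * A) * Vs)) * B) := by
    have t1 : B * (Us * A) * B = B * Us := by
      rw [mul_assoc B (Us * A) B, mul_assoc Us A B, hAB, mul_one]
    have t2 : B * (A * Us) * B = Us * B := by
      rw [← mul_assoc B A Us, hBA, one_mul]
    have t3 : B * (Vs * (Sc * A)) * B = (Sc * B) * Vs := by
      rw [hScomm A, ← mul_assoc Vs A Sc, ← mul_assoc B (Vs * A) Sc,
        mul_assoc (B * (Vs * A)) Sc B, hScomm B, ← mul_assoc B Vs A,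
        mul_assoc (B * Vs) A (B * Sc), ← mul_assoc A B Sc, hAB, one_mul,
        ← hScomm (B * Vs), ← mul_assoc Sc B Vs, hScomm B]
    have t4 : B * ((Sc * A) * Vs) * B = Vs * (Sc * B) := by
      rw [← mul_assoc B (Sc * A) Vs, ← mul_assoc B Sc A, ← hScomm B,
        mul_assoc Sc B A, hBA, mul_one, hScomm Vs, mul_assoc Vs Sc B]
    have expand : B * (Us * A - A * Us - (Vs * (Sc * A) - (Sc * A) * Vs)) * B
        = B * (Us * A) * B - B * (A * Us) * B - (B * (Vs * (Sc * A)) * B - B * ((Sc * A) * Vs) * B) := by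
      simp only [mul_sub, sub_mul]
    rw [expand, t1, t2, t3, t4]
    abel
  -- combine
  have hfin : Us * B - B * Us - (Vs * (Sc * B) - (Sc * B) * Vs) = B * Q - P * B := by
    rw [hLB, hLA]
    have e3 : B * (A * P - Q * A) * B = P * B - B * Q := by
      have e4 : B * (A * P - Q * A) * B = B * (A * P) * B - B * (Q * A) * B := by
        simp only [mul_sub, sub_mul]
      rw [e4, ← mul_assoc B A P, hBA, one_mul, mul_assoc B (Q * A) B,
        mul_assoc Q A B, hAB, mul_one]
    rw [e3]
    abel
  -- extract the (h, k) entry and the coefficient of w^{-n}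
  have hent := congrArg (fun M : Matrix (Fin N) (Fin N) (LaurentSeries U) => M h k) hfin
  simp only [Matrix.sub_apply, hUs, hVs, hSc, Matrix.diagonal_mul, Matrix.mul_diagonal] at hent
  have hco := congrArg (fun C : LaurentSeries U => C.coeff n) hent
  simp only [HahnSeries.coeff_sub, hu, hv, hs, HahnSeries.coeff_single_zero_mul,
    HahnSeries.coeff_mul_single_zero, shift_coeff, Matrix.mul_apply] at hco
  rw [coeff_sum', coeff_sum'] at hco
  have eQ : ∑ x : Fin N, (B h x * Q x k).coeff n
      = if i = k then ∑ t : Fin N, (B h t).coeff n * (A t j).coeff m else 0 := by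
    by_cases hik : i = k
    · subst hik
      simp [hQ, mul_ite, mul_zero, HahnSeries.coeff_mul_single_zero]
    · have hz : ∀ x : Fin N, Q x k = 0 := by
        intro x
        simp only [hQ]
        rw [if_neg]
        intro hh
        exact hik (hh ▸ rfl)
      simp [hz, hik]
  have eP : ∑ x : Fin N, (P h x * B x k).coeff n
      = if h = j then ∑ t : Fin N, (A i t).coeff m * (B t k).coeff n else 0 := by
    by_cases hhj : h = j
    · subst hhj
      simp [hP, ite_mul, zero_mul, HahnSeries.coeff_single_zero_mul]
    · have hz : ∀ x : Fin N, P h x = 0 := by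
        intro x
        simp only [hP]
        rw [if_neg hhj]
      simp [hz, hhj]
  rw [eQ, eP] at hco
  rw [hco]
  by_cases hhj : h = j <;> by_cases hik : i = k <;>
    simp [hhj, hik] <;> abel
end

section
/- Let g, f, I, M, W̃ be as in the general finite W-algebra setup, and let χ : U(g_{≥1}) → 𝔽 be the unique algebra homomorphism with χ(m) = (f|m) for all m ∈ g_{≥1} (it exists because (f|·) vanishes on [g_{≥1}, g_{≥1}]). Then for every w ∈ W̃, g ∈ U(g), q in the unital subalgebra of U(g) generated by g_{≥1/2}, and u in the unital subalgebra of U(g) generated by g_{≥1}: g·q·u·w·1̄ = χ(u) · g·w·q·1̄ in M. -/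
set_option maxHeartbeats 1000000
set_option synthInstance.maxHeartbeats 200000

/- General finite W-algebra setup: `g` is a Lie algebra over a field `𝔽` of characteristic 0,
with a nondegenerate symmetric invariant bilinear form `B` and a `½ℤ`-grading encoded by
`gr : ℤ → Submodule 𝔽 g` (`gr d` is the component `g_{d/2}`); thus `g_{≥1} = ⨆ k ≥ 2, gr k`,
`g_{≥1/2} = ⨆ k ≥ 1, gr k`, and `f ∈ g_{−1} = gr (−2)`. `I` is the left ideal of `U(g)`
generated by `{m − (f|m) : m ∈ g_{≥1}}`, `M = U(g)/I`, and
`W̃ = {w : ι(a)·w − w·ι(a) ∈ I for all a ∈ g_{≥1/2}}`. -/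

/-- Induction principle for membership in `⨆ k ≥ n, p k`. -/
theorem biSup_ind' {R M : Type*} [Semiring R] [AddCommMonoid M] [Module R M]
    (p : ℤ → Submodule R M) (n : ℤ) {C : M → Prop} {x : M}
    (hx : x ∈ ⨆ k ≥ n, p k)
    (hp : ∀ k, n ≤ k → ∀ y ∈ p k, C y) (h0 : C 0)
    (hadd : ∀ y z, C y → C z → C (y + z)) : C x := by
  refine Submodule.iSup_induction (motive := C) (fun k => ⨆ _ : k ≥ n, p k) hx ?_ h0 hadd
  intro i y hy
  by_cases h : i ≥ n
  · have hy' : y ∈ ⨆ _ : i ≥ n, p i := hy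
    rw [iSup_pos h] at hy'; exact hp i h y hy'
  · have hy' : y ∈ ⨆ _ : i ≥ n, p i := hy
    rw [iSup_neg h, Submodule.mem_bot] at hy'
    simpa [hy'] using h0

/-- Let `χ` be the (unique) algebra homomorphism from the unital subalgebra of
`U(g)` generated by `g_{≥1}` to `𝔽` with `χ(m) = (f|m)` for all `m ∈ g_{≥1}`. Then for every
`w ∈ W̃`, `G ∈ U(g)`, `q` in the unital subalgebra generated by `g_{≥1/2}` and `u` in the unital
subalgebra generated by `g_{≥1}`: `G·q·u·w·1̄ = χ(u)·G·w·q·1̄` in `M = U(g)/I`, i.e.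
`G·q·u·w − χ(u)·(G·w·q) ∈ I`. -/
theorem stmt_10 {𝔽 : Type*} [Field 𝔽] [CharZero 𝔽]
    {g : Type*} [LieRing g] [LieAlgebra 𝔽 g]
    (B : LinearMap.BilinForm 𝔽 g)
    (hsymm : ∀ x y : g, B x y = B y x)
    (hinvar : ∀ x y z : g, B ⁅x, y⁆ z = B x ⁅y, z⁆)
    (hnondeg : ∀ x : g, (∀ y : g, B x y = 0) → x = 0)
    (gr : ℤ → Submodule 𝔽 g)
    (hds : DirectSum.IsInternal gr)
    (hbr : ∀ (d e : ℤ), ∀ x ∈ gr d, ∀ y ∈ gr e, ⁅x, y⁆ ∈ gr (d + e))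
    (horth : ∀ (d e : ℤ), d + e ≠ 0 → ∀ x ∈ gr d, ∀ y ∈ gr e, B x y = 0)
    (f : g) (hf : f ∈ gr (-2))
    (I : Ideal (UniversalEnvelopingAlgebra 𝔽 g))
    (hI : I = Ideal.span {x | ∃ m ∈ (⨆ k ≥ (2 : ℤ), gr k),
      x = UniversalEnvelopingAlgebra.ι 𝔽 m - algebraMap 𝔽 _ (B f m)})
    (χ : Algebra.adjoin 𝔽
        ((UniversalEnvelopingAlgebra.ι 𝔽 : g → UniversalEnvelopingAlgebra 𝔽 g) ''
          ((⨆ k ≥ (2 : ℤ), gr k : Submodule 𝔽 g) : Set g)) →ₐ[𝔽] 𝔽)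
    (hχ : ∀ (m : g) (hm : m ∈ (⨆ k ≥ (2 : ℤ), gr k : Submodule 𝔽 g)),
      χ ⟨UniversalEnvelopingAlgebra.ι 𝔽 m,
        Algebra.subset_adjoin (Set.mem_image_of_mem _ hm)⟩ = B f m)
    (w : UniversalEnvelopingAlgebra 𝔽 g)
    (hw : ∀ a ∈ (⨆ k ≥ (1 : ℤ), gr k : Submodule 𝔽 g),
      UniversalEnvelopingAlgebra.ι 𝔽 a * w - w * UniversalEnvelopingAlgebra.ι 𝔽 a ∈ I)
    (G : UniversalEnvelopingAlgebra 𝔽 g)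
    (q : UniversalEnvelopingAlgebra 𝔽 g)
    (hq : q ∈ Algebra.adjoin 𝔽
      ((UniversalEnvelopingAlgebra.ι 𝔽 : g → UniversalEnvelopingAlgebra 𝔽 g) ''
        ((⨆ k ≥ (1 : ℤ), gr k : Submodule 𝔽 g) : Set g)))
    (u : UniversalEnvelopingAlgebra 𝔽 g)
    (hu : u ∈ Algebra.adjoin 𝔽
      ((UniversalEnvelopingAlgebra.ι 𝔽 : g → UniversalEnvelopingAlgebra 𝔽 g) ''
        ((⨆ k ≥ (2 : ℤ), gr k : Submodule 𝔽 g) : Set g))) :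
    G * q * u * w - χ ⟨u, hu⟩ • (G * w * q) ∈ I := by
  classical
  -- g_{≥1} ⊆ g_{≥1/2}
  have hsub : (⨆ k ≥ (2 : ℤ), gr k : Submodule 𝔽 g) ≤ ⨆ k ≥ (1 : ℤ), gr k :=
    biSup_mono (fun k hk => by omega)
  -- generators of I are in I
  have hgen : ∀ m ∈ (⨆ k ≥ (2 : ℤ), gr k : Submodule 𝔽 g),
      UniversalEnvelopingAlgebra.ι 𝔽 m - algebraMap 𝔽 _ (B f m) ∈ I := by
    intro m hm
    rw [hI]
    exact Ideal.subset_span ⟨m, hm, rfl⟩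
  -- Lemma A : bracket of S2 with S1 lands in S2 and is B-f-orthogonal
  have hbrA : ∀ m ∈ (⨆ k ≥ (2 : ℤ), gr k : Submodule 𝔽 g),
      ∀ a ∈ (⨆ k ≥ (1 : ℤ), gr k : Submodule 𝔽 g),
      ⁅m, a⁆ ∈ (⨆ k ≥ (2 : ℤ), gr k : Submodule 𝔽 g) ∧ B f ⁅m, a⁆ = 0 := by
    intro m hm
    refine biSup_ind' gr 2
      (C := fun m => ∀ a ∈ (⨆ k ≥ (1 : ℤ), gr k : Submodule 𝔽 g),
        ⁅m, a⁆ ∈ (⨆ k ≥ (2 : ℤ), gr k : Submodule 𝔽 g) ∧ B f ⁅m, a⁆ = 0)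
      hm (fun k hk m' hm' => ?_) (fun a _ => by simp) ?_
    · intro a ha
      refine biSup_ind' gr 1
        (C := fun a => ⁅m', a⁆ ∈ (⨆ k ≥ (2 : ℤ), gr k : Submodule 𝔽 g) ∧ B f ⁅m', a⁆ = 0)
        ha (fun j hj a' ha' => ?_) (by simp) ?_
      · constructor
        · exact Submodule.mem_iSup_of_mem (k + j)
            (Submodule.mem_iSup_of_mem (show k + j ≥ 2 by omega) (hbr k j m' hm' a' ha'))
        · exact horth (-2) (k + j) (by omega) f hf _ (hbr k j m' hm' a' ha')
      · intro y z hy hz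
        refine ⟨?_, ?_⟩
        · simpa [lie_add] using add_mem hy.1 hz.1
        · simp [lie_add, hy.2, hz.2]
    · intro y z hy hz a ha
      refine ⟨?_, ?_⟩
      · simpa [add_lie] using add_mem ((hy a ha).1) ((hz a ha).1)
      · simp [add_lie, (hy a ha).2, (hz a ha).2]
  -- Lemma B : I is stable under right multiplication by ι a, a ∈ S1
  have hrmul1 : ∀ a ∈ (⨆ k ≥ (1 : ℤ), gr k : Submodule 𝔽 g),
      ∀ x ∈ I, x * UniversalEnvelopingAlgebra.ι 𝔽 a ∈ I := by
    intro a ha x hx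
    rw [hI] at hx
    induction hx using Submodule.span_induction with
    | mem x hxmem =>
      obtain ⟨m, hm, rfl⟩ := hxmem
      have hlie : (UniversalEnvelopingAlgebra.ι 𝔽 ⁅m, a⁆ : UniversalEnvelopingAlgebra 𝔽 g)
          = UniversalEnvelopingAlgebra.ι 𝔽 m * UniversalEnvelopingAlgebra.ι 𝔽 a
            - UniversalEnvelopingAlgebra.ι 𝔽 a * UniversalEnvelopingAlgebra.ι 𝔽 m := by
        letI : LieRing (UniversalEnvelopingAlgebra 𝔽 g) := LieRing.ofAssociativeRing
        rw [LieHom.map_lie, Ring.lie_def]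
      have key : (UniversalEnvelopingAlgebra.ι 𝔽 m - algebraMap 𝔽 _ (B f m))
            * UniversalEnvelopingAlgebra.ι 𝔽 a
          = UniversalEnvelopingAlgebra.ι 𝔽 a
              * (UniversalEnvelopingAlgebra.ι 𝔽 m - algebraMap 𝔽 _ (B f m))
            + UniversalEnvelopingAlgebra.ι 𝔽 ⁅m, a⁆ := by
        rw [hlie, sub_mul, mul_sub, Algebra.commutes]
        abel
      rw [key]
      refine add_mem (I.mul_mem_left _ (hgen m hm)) ?_
      have h0 : B f ⁅m, a⁆ = 0 := (hbrA m hm a ha).2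
      have := hgen ⁅m, a⁆ (hbrA m hm a ha).1
      rw [h0] at this
      simpa using this
    | zero => simpa using I.zero_mem
    | add x y hx' hy' ihx ihy => simpa [add_mul] using add_mem ihx ihy
    | smul r x hx' ihx =>
      simpa [smul_eq_mul, mul_assoc] using I.mul_mem_left r ihx
  -- Lemma C : I is stable under right multiplication by the subalgebra generated by S1
  have hrmul : ∀ p ∈ Algebra.adjoin 𝔽
      ((UniversalEnvelopingAlgebra.ι 𝔽 : g → UniversalEnvelopingAlgebra 𝔽 g) ''
        ((⨆ k ≥ (1 : ℤ), gr k : Submodule 𝔽 g) : Set g)),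
      ∀ x ∈ I, x * p ∈ I := by
    intro p hp
    induction hp using Algebra.adjoin_induction with
    | mem p hpmem =>
      obtain ⟨a, ha, rfl⟩ := hpmem
      exact hrmul1 a ha
    | algebraMap r =>
      intro x hx
      rw [← Algebra.commutes]
      exact I.mul_mem_left _ hx
    | add p₁ p₂ h₁ h₂ ih₁ ih₂ =>
      intro x hx
      simpa [mul_add] using add_mem (ih₁ x hx) (ih₂ x hx)
    | mul p₁ p₂ h₁ h₂ ih₁ ih₂ =>
      intro x hx
      rw [← mul_assoc]
      exact ih₂ _ (ih₁ x hx)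
  -- Lemma D : u * w ≡ χ(u) • w mod I
  have hD : ∀ (u' : UniversalEnvelopingAlgebra 𝔽 g)
      (hu' : u' ∈ Algebra.adjoin 𝔽
        ((UniversalEnvelopingAlgebra.ι 𝔽 : g → UniversalEnvelopingAlgebra 𝔽 g) ''
          ((⨆ k ≥ (2 : ℤ), gr k : Submodule 𝔽 g) : Set g))),
      u' * w - χ ⟨u', hu'⟩ • w ∈ I := by
    intro u' hu'
    induction hu' using Algebra.adjoin_induction with
    | mem x hxmem =>
      obtain ⟨m, hm, rfl⟩ := hxmem
      have hχm : χ ⟨UniversalEnvelopingAlgebra.ι 𝔽 m,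
          Algebra.subset_adjoin (Set.mem_image_of_mem _ hm)⟩ = B f m := hχ m hm
      rw [show (⟨UniversalEnvelopingAlgebra.ι 𝔽 m, Algebra.subset_adjoin
          (Set.mem_image_of_mem _ hm)⟩ :
          Algebra.adjoin 𝔽 ((UniversalEnvelopingAlgebra.ι 𝔽 : g →
            UniversalEnvelopingAlgebra 𝔽 g) ''
            ((⨆ k ≥ (2 : ℤ), gr k : Submodule 𝔽 g) : Set g)))
          = ⟨UniversalEnvelopingAlgebra.ι 𝔽 m, Algebra.subset_adjoin
            (Set.mem_image_of_mem _ hm)⟩ from rfl, hχm]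
      have key : UniversalEnvelopingAlgebra.ι 𝔽 m * w - (B f m) • w
          = (UniversalEnvelopingAlgebra.ι 𝔽 m * w - w * UniversalEnvelopingAlgebra.ι 𝔽 m)
            + w * (UniversalEnvelopingAlgebra.ι 𝔽 m - algebraMap 𝔽 _ (B f m)) := by
        rw [Algebra.smul_def, Algebra.commutes, mul_sub]
        abel
      rw [key]
      exact add_mem (hw m (hsub hm)) (I.mul_mem_left w (hgen m hm))
    | algebraMap r =>
      have hval : χ ⟨algebraMap 𝔽 _ r, Subalgebra.algebraMap_mem _ r⟩ = r := by
        have h1 : (⟨algebraMap 𝔽 _ r, Subalgebra.algebraMap_mem _ r⟩ :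
            Algebra.adjoin 𝔽 ((UniversalEnvelopingAlgebra.ι 𝔽 : g →
              UniversalEnvelopingAlgebra 𝔽 g) ''
              ((⨆ k ≥ (2 : ℤ), gr k : Submodule 𝔽 g) : Set g)))
            = algebraMap 𝔽 _ r := rfl
        rw [h1, AlgHom.commutes]
        simp
      rw [hval, Algebra.smul_def, sub_self]
      exact I.zero_mem
    | add x y hx hy ihx ihy =>
      have hxy : (⟨x + y, add_mem hx hy⟩ :
          Algebra.adjoin 𝔽 ((UniversalEnvelopingAlgebra.ι 𝔽 : g →
            UniversalEnvelopingAlgebra 𝔽 g) ''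
            ((⨆ k ≥ (2 : ℤ), gr k : Submodule 𝔽 g) : Set g)))
          = ⟨x, hx⟩ + ⟨y, hy⟩ := rfl
      rw [hxy, map_add]
      have key : (x + y) * w - (χ ⟨x, hx⟩ + χ ⟨y, hy⟩) • w
          = (x * w - χ ⟨x, hx⟩ • w) + (y * w - χ ⟨y, hy⟩ • w) := by
        rw [add_mul, add_smul]; abel
      rw [key]
      exact add_mem ihx ihy
    | mul x y hx hy ihx ihy =>
      have hxy : (⟨x * y, mul_mem hx hy⟩ :
          Algebra.adjoin 𝔽 ((UniversalEnvelopingAlgebra.ι 𝔽 : g →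
            UniversalEnvelopingAlgebra 𝔽 g) ''
            ((⨆ k ≥ (2 : ℤ), gr k : Submodule 𝔽 g) : Set g)))
          = ⟨x, hx⟩ * ⟨y, hy⟩ := rfl
      rw [hxy, map_mul]
      have key : (x * y) * w - (χ ⟨x, hx⟩ * χ ⟨y, hy⟩) • w
          = x * (y * w - χ ⟨y, hy⟩ • w) + χ ⟨y, hy⟩ • (x * w - χ ⟨x, hx⟩ • w) := by
        rw [mul_sub, smul_sub, mul_smul_comm, smul_smul, mul_assoc,
          mul_comm (χ ⟨y, hy⟩) (χ ⟨x, hx⟩)]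
        abel
      rw [key]
      exact add_mem (I.mul_mem_left x ihy) (I.smul_of_tower_mem _ ihx)
  -- Lemma E : q * w ≡ w * q mod I
  have hE : ∀ p ∈ Algebra.adjoin 𝔽
      ((UniversalEnvelopingAlgebra.ι 𝔽 : g → UniversalEnvelopingAlgebra 𝔽 g) ''
        ((⨆ k ≥ (1 : ℤ), gr k : Submodule 𝔽 g) : Set g)),
      p * w - w * p ∈ I := by
    intro p hp
    induction hp using Algebra.adjoin_induction with
    | mem x hxmem =>
      obtain ⟨a, ha, rfl⟩ := hxmem
      exact hw a ha
    | algebraMap r =>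
      rw [← Algebra.commutes, sub_self]
      exact I.zero_mem
    | add x y hx hy ihx ihy =>
      have key : (x + y) * w - w * (x + y) = (x * w - w * x) + (y * w - w * y) := by
        rw [add_mul, mul_add]; abel
      rw [key]
      exact add_mem ihx ihy
    | mul x y hx hy ihx ihy =>
      have key : (x * y) * w - w * (x * y)
          = x * (y * w - w * y) + (x * w - w * x) * y := by
        rw [mul_sub, sub_mul, mul_assoc, mul_assoc, mul_assoc]
        abel
      rw [key]
      exact add_mem (I.mul_mem_left x ihy) (hrmul y hy _ ihx)
  -- Assembly
  have key : G * q * u * w - χ ⟨u, hu⟩ • (G * w * q)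
      = (G * q) * (u * w - χ ⟨u, hu⟩ • w) + χ ⟨u, hu⟩ • (G * (q * w - w * q)) := by
    simp only [mul_sub, smul_sub, mul_smul_comm, mul_assoc]
    abel
  rw [key]
  exact add_mem (I.mul_mem_left _ (hD u hu))
    (I.smul_of_tower_mem _ (I.mul_mem_left G (hE q hq)))
end

section
/- (Premet) Let g, f, I, M, W̃ be as in the general finite W-algebra setup. Let w₁, w₂ ∈ W̃ and suppose w₁ = Σ_a A_a p_a and w₂ = Σ_b B_b q_b are finite sums with A_a, B_b in the unital subalgebra of U(g) generated by g_{≤0} and p_a, q_b in the unital subalgebra of U(g) generated by g_{≥1/2}. Then w₁·w₂·1̄ = Σ_{a,b} A_a B_b q_b p_a 1̄ in M. (This expresses that the map ρ : W̃ → U(g_{≤0}) ⊗ F^{op}(g_{1/2}) is an algebra homomorphism, where F^{op}(g_{1/2}) carries the opposite product.) -/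
/- General finite W-algebra setup: `g` is a Lie algebra over a field `𝔽` of characteristic 0,
with a nondegenerate symmetric invariant bilinear form `B` and a `½ℤ`-grading encoded by
`gr : ℤ → Submodule 𝔽 g` (`gr d` is the component `g_{d/2}`); thus `g_{≤0} = ⨆ k ≤ 0, gr k`,
`g_{≥1} = ⨆ k ≥ 2, gr k`, `g_{≥1/2} = ⨆ k ≥ 1, gr k`, and `f ∈ g_{−1} = gr (−2)`. `I` is the
left ideal of `U(g)` generated by `{m − (f|m) : m ∈ g_{≥1}}`, `M = U(g)/I` with cyclic vector
`1̄`, and `W̃ = {w : ι(a)·w − w·ι(a) ∈ I for all a ∈ g_{≥1/2}}`. -/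

/-- Premet: Let `w₁, w₂ ∈ W̃` with finite-sum expansions `w₁ = Σ_a A_a p_a`,
`w₂ = Σ_b B_b q_b`, where `A_a, B_b` lie in the unital subalgebra of `U(g)` generated by
`g_{≤0}` and `p_a, q_b` in the unital subalgebra generated by `g_{≥1/2}`. Then
`w₁·w₂·1̄ = Σ_{a,b} A_a B_b q_b p_a ·1̄` in `M = U(g)/I`, i.e.
`w₁w₂ − Σ_{a,b} A_a B_b q_b p_a ∈ I`. (This expresses that
`ρ : W̃ → U(g_{≤0}) ⊗ F^{op}(g_{1/2})` is an algebra homomorphism.) -/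
theorem stmt_11 {𝔽 : Type*} [Field 𝔽] [CharZero 𝔽]
    {g : Type*} [LieRing g] [LieAlgebra 𝔽 g]
    (B : LinearMap.BilinForm 𝔽 g)
    (hsymm : ∀ x y : g, B x y = B y x)
    (hinvar : ∀ x y z : g, B ⁅x, y⁆ z = B x ⁅y, z⁆)
    (hnondeg : ∀ x : g, (∀ y : g, B x y = 0) → x = 0)
    (gr : ℤ → Submodule 𝔽 g)
    (hds : DirectSum.IsInternal gr)
    (hbr : ∀ (d e : ℤ), ∀ x ∈ gr d, ∀ y ∈ gr e, ⁅x, y⁆ ∈ gr (d + e))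
    (horth : ∀ (d e : ℤ), d + e ≠ 0 → ∀ x ∈ gr d, ∀ y ∈ gr e, B x y = 0)
    (f : g) (hf : f ∈ gr (-2))
    (I : Ideal (UniversalEnvelopingAlgebra 𝔽 g))
    (hI : I = Ideal.span {x | ∃ m ∈ (⨆ k ≥ (2 : ℤ), gr k),
      x = UniversalEnvelopingAlgebra.ι 𝔽 m - algebraMap 𝔽 _ (B f m)})
    (w₁ w₂ : UniversalEnvelopingAlgebra 𝔽 g)
    (hw₁ : ∀ a ∈ (⨆ k ≥ (1 : ℤ), gr k : Submodule 𝔽 g),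
      UniversalEnvelopingAlgebra.ι 𝔽 a * w₁ - w₁ * UniversalEnvelopingAlgebra.ι 𝔽 a ∈ I)
    (hw₂ : ∀ a ∈ (⨆ k ≥ (1 : ℤ), gr k : Submodule 𝔽 g),
      UniversalEnvelopingAlgebra.ι 𝔽 a * w₂ - w₂ * UniversalEnvelopingAlgebra.ι 𝔽 a ∈ I)
    (s₁ s₂ : ℕ)
    (A : Fin s₁ → UniversalEnvelopingAlgebra 𝔽 g)
    (p : Fin s₁ → UniversalEnvelopingAlgebra 𝔽 g)
    (C : Fin s₂ → UniversalEnvelopingAlgebra 𝔽 g)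
    (q : Fin s₂ → UniversalEnvelopingAlgebra 𝔽 g)
    (hA : ∀ a, A a ∈ Algebra.adjoin 𝔽
      ((UniversalEnvelopingAlgebra.ι 𝔽 : g → UniversalEnvelopingAlgebra 𝔽 g) ''
        ((⨆ k ≤ (0 : ℤ), gr k : Submodule 𝔽 g) : Set g)))
    (hC : ∀ b, C b ∈ Algebra.adjoin 𝔽
      ((UniversalEnvelopingAlgebra.ι 𝔽 : g → UniversalEnvelopingAlgebra 𝔽 g) ''
        ((⨆ k ≤ (0 : ℤ), gr k : Submodule 𝔽 g) : Set g)))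
    (hp : ∀ a, p a ∈ Algebra.adjoin 𝔽
      ((UniversalEnvelopingAlgebra.ι 𝔽 : g → UniversalEnvelopingAlgebra 𝔽 g) ''
        ((⨆ k ≥ (1 : ℤ), gr k : Submodule 𝔽 g) : Set g)))
    (hq : ∀ b, q b ∈ Algebra.adjoin 𝔽
      ((UniversalEnvelopingAlgebra.ι 𝔽 : g → UniversalEnvelopingAlgebra 𝔽 g) ''
        ((⨆ k ≥ (1 : ℤ), gr k : Submodule 𝔽 g) : Set g)))
    (hexp₁ : w₁ = ∑ a, A a * p a)
    (hexp₂ : w₂ = ∑ b, C b * q b) :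
    w₁ * w₂ - ∑ a, ∑ b, A a * C b * q b * p a ∈ I := by
  letI : LieRing (UniversalEnvelopingAlgebra 𝔽 g) := LieRing.ofAssociativeRing
  set ι := (UniversalEnvelopingAlgebra.ι 𝔽 : g →ₗ⁅𝔽⁆ UniversalEnvelopingAlgebra 𝔽 g) with hι
  -- Step 1: for a ∈ gr d with d ≥ 1 and m ∈ ⨆ k ≥ 2, gr k, we have ι ⁅a, m⁆ ∈ I
  have key1 : ∀ (d : ℤ), 1 ≤ d → ∀ a ∈ gr d, ∀ m ∈ (⨆ k ≥ (2 : ℤ), gr k : Submodule 𝔽 g),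
      ι ⁅a, m⁆ ∈ I := by
    intro d hd a ha m hm
    let L : g →ₗ[𝔽] UniversalEnvelopingAlgebra 𝔽 g :=
      ι.toLinearMap ∘ₗ (LieDerivation.ad 𝔽 g a).toLinearMap
    have hLm : ∀ y, L y = ι ⁅a, y⁆ := fun y => by
      simp [L, LieDerivation.ad_apply_apply]
    have hle : (⨆ k ≥ (2 : ℤ), gr k : Submodule 𝔽 g) ≤
        Submodule.comap L (I.restrictScalars 𝔽) := by
      refine iSup₂_le fun k hk => fun y hy => ?_
      have hbky : ⁅a, y⁆ ∈ gr (d + k) := hbr d k a ha y hy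
      have hBzero : B f ⁅a, y⁆ = 0 := by
        rw [hsymm]
        exact horth (d + k) (-2) (by omega) _ hbky f hf
      have hmem : ⁅a, y⁆ ∈ (⨆ k ≥ (2 : ℤ), gr k : Submodule 𝔽 g) :=
        Submodule.mem_iSup_of_mem (d + k)
          (Submodule.mem_iSup_of_mem (show d + k ≥ 2 by omega) hbky)
      have hgen : ι ⁅a, y⁆ - algebraMap 𝔽 _ (B f ⁅a, y⁆) ∈
          {x | ∃ m ∈ (⨆ k ≥ (2 : ℤ), gr k : Submodule 𝔽 g),
            x = UniversalEnvelopingAlgebra.ι 𝔽 m - algebraMap 𝔽 _ (B f m)} :=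
        ⟨⁅a, y⁆, hmem, rfl⟩
      have hII : ι ⁅a, y⁆ ∈ I := by
        have := hI ▸ Ideal.subset_span hgen
        rwa [hBzero, map_zero, sub_zero] at this
      simpa [Submodule.mem_comap, hLm] using hII
    simpa [Submodule.mem_comap, hLm] using hle hm
  -- Step 2: I is stable under commutation with ι a, for a ∈ ⨆ k ≥ 1, gr k
  have key2 : ∀ a ∈ (⨆ k ≥ (1 : ℤ), gr k : Submodule 𝔽 g), ∀ j ∈ I,
      ι a * j - j * ι a ∈ I := by
    have step : ∀ (d : ℤ), 1 ≤ d → ∀ a ∈ gr d, ∀ j ∈ I, ι a * j - j * ι a ∈ I := by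
      intro d hd a ha j hj
      rw [hI] at hj
      induction hj using Submodule.span_induction with
      | mem x hx =>
        obtain ⟨m, hm, rfl⟩ := hx
        have heq : ι a * (ι m - algebraMap 𝔽 _ (B f m)) -
            (ι m - algebraMap 𝔽 _ (B f m)) * ι a = ι ⁅a, m⁆ := by
          rw [LieHom.map_lie, Ring.lie_def, mul_sub, sub_mul,
            Algebra.commutes (B f m) (ι a)]
          abel
        rw [show (UniversalEnvelopingAlgebra.ι 𝔽 m : UniversalEnvelopingAlgebra 𝔽 g) = ι m
          from rfl, heq]
        exact key1 d hd a ha m hm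
      | zero => simpa using I.zero_mem
      | add x y hx hy ihx ihy =>
        have heq : ι a * (x + y) - (x + y) * ι a
            = (ι a * x - x * ι a) + (ι a * y - y * ι a) := by noncomm_ring
        rw [heq]; exact I.add_mem ihx ihy
      | smul r x hx ihx =>
        have heq : ι a * (r • x) - (r • x) * ι a
            = r * (ι a * x - x * ι a) + (ι a * r - r * ι a) * x := by
          simp only [smul_eq_mul]; noncomm_ring
        rw [heq]
        refine I.add_mem (I.mul_mem_left r ihx) (I.mul_mem_left _ ?_)
        rw [hI]; exact hx
    intro a ha j hj
    let L : g →ₗ[𝔽] UniversalEnvelopingAlgebra 𝔽 g :=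
      LinearMap.mulRight 𝔽 j ∘ₗ ι.toLinearMap - LinearMap.mulLeft 𝔽 j ∘ₗ ι.toLinearMap
    have hL : ∀ y, L y = ι y * j - j * ι y := fun y => rfl
    have hle : (⨆ k ≥ (1 : ℤ), gr k : Submodule 𝔽 g) ≤
        Submodule.comap L (I.restrictScalars 𝔽) := by
      refine iSup₂_le fun k hk => fun y hy => ?_
      simpa [Submodule.mem_comap, hL] using step k hk y hy j hj
    simpa [Submodule.mem_comap, hL] using hle ha
  -- Step 3: I is stable under right multiplication by the subalgebra generated by ι(g_{≥1/2})
  have key3 : ∀ y ∈ Algebra.adjoin 𝔽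
      ((ι : g → UniversalEnvelopingAlgebra 𝔽 g) ''
        ((⨆ k ≥ (1 : ℤ), gr k : Submodule 𝔽 g) : Set g)),
      ∀ j ∈ I, j * y ∈ I := by
    intro y hy
    induction hy using Algebra.adjoin_induction with
    | mem x hx =>
      obtain ⟨a, ha, rfl⟩ := hx
      intro j hj
      have heq : j * ι a = ι a * j - (ι a * j - j * ι a) := by noncomm_ring
      rw [heq]
      exact I.sub_mem (I.mul_mem_left _ hj) (key2 a ha j hj)
    | algebraMap r =>
      intro j hj
      rw [← Algebra.commutes r j]
      exact I.mul_mem_left _ hj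
    | add x y hx hy ihx ihy =>
      intro j hj
      rw [mul_add]
      exact I.add_mem (ihx j hj) (ihy j hj)
    | mul x y hx hy ihx ihy =>
      intro j hj
      rw [← mul_assoc]
      exact ihy _ (ihx j hj)
  -- Step 4: for pp in that subalgebra, pp * w₂ - w₂ * pp ∈ I
  have key4 : ∀ pp ∈ Algebra.adjoin 𝔽
      ((ι : g → UniversalEnvelopingAlgebra 𝔽 g) ''
        ((⨆ k ≥ (1 : ℤ), gr k : Submodule 𝔽 g) : Set g)),
      pp * w₂ - w₂ * pp ∈ I := by
    intro pp hpp
    induction hpp using Algebra.adjoin_induction with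
    | mem x hx =>
      obtain ⟨a, ha, rfl⟩ := hx
      exact hw₂ a ha
    | algebraMap r =>
      rw [Algebra.commutes r w₂, sub_self]
      exact I.zero_mem
    | add x y hx hy ihx ihy =>
      have heq : (x + y) * w₂ - w₂ * (x + y)
          = (x * w₂ - w₂ * x) + (y * w₂ - w₂ * y) := by noncomm_ring
      rw [heq]; exact I.add_mem ihx ihy
    | mul x y hx hy ihx ihy =>
      have heq : x * y * w₂ - w₂ * (x * y)
          = x * (y * w₂ - w₂ * y) + (x * w₂ - w₂ * x) * y := by noncomm_ring
      rw [heq]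
      exact I.add_mem (I.mul_mem_left x ihy) (key3 y hy _ ihx)
  -- Final computation
  have e1 : w₁ * w₂ = ∑ a, A a * (p a * w₂) := by
    rw [hexp₁, Finset.sum_mul]
    exact Finset.sum_congr rfl fun a _ => mul_assoc _ _ _
  have e2 : ∀ a, A a * (w₂ * p a) = ∑ b, A a * C b * q b * p a := by
    intro a
    rw [hexp₂, Finset.sum_mul, Finset.mul_sum]
    exact Finset.sum_congr rfl fun b _ => by noncomm_ring
  have hfin : w₁ * w₂ - ∑ a, ∑ b, A a * C b * q b * p a
      = ∑ a, A a * (p a * w₂ - w₂ * p a) := by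
    have : ∑ a, A a * (p a * w₂ - w₂ * p a)
        = (∑ a, A a * (p a * w₂)) - ∑ a, ∑ b, A a * C b * q b * p a := by
      rw [← Finset.sum_sub_distrib]
      exact Finset.sum_congr rfl fun a _ => by rw [mul_sub, e2 a]
    rw [this, ← e1]
  rw [hfin]
  exact Submodule.sum_mem I fun a _ => I.mul_mem_left (A a) (key4 (p a) (hp a))
end

section
/- Let g, f, I be as in the general finite W-algebra setup and let F_Δ U(g) (Δ ∈ ½ℤ) be the Kazhdan filtration, with F_ΔI = F_ΔU(g) ∩ I. Then: (a) for every Δ < 0, F_ΔU(g) = F_ΔI (equivalently, F_ΔU(g) ⊆ I); (b) F₀U(g) = 𝔽·1 + F₀I, and this sum is direct provided I ≠ U(g). -/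
namespace Stmt12Aux

variable {𝔽 : Type*} [Field 𝔽] {g : Type*} [LieRing g] [LieAlgebra 𝔽 g]

noncomputable def pr (𝔽 : Type*) [Field 𝔽] {g : Type*} [LieRing g] [LieAlgebra 𝔽 g]
    (L : List (ℤ × g)) : UniversalEnvelopingAlgebra 𝔽 g :=
  (L.map (fun p => UniversalEnvelopingAlgebra.ι 𝔽 p.2)).prod

def wt {g : Type*} (L : List (ℤ × g)) : ℤ := (L.map (fun p => 2 - p.1)).sum

@[simp] lemma pr_nil : pr 𝔽 ([] : List (ℤ × g)) = 1 := rfl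

@[simp] lemma pr_cons (p : ℤ × g) (L : List (ℤ × g)) :
    pr 𝔽 (p :: L) = UniversalEnvelopingAlgebra.ι 𝔽 p.2 * pr 𝔽 L := by
  simp [pr]

@[simp] lemma pr_append (A B : List (ℤ × g)) : pr 𝔽 (A ++ B) = pr 𝔽 A * pr 𝔽 B := by
  simp [pr]

@[simp] lemma wt_nil {g : Type*} : wt ([] : List (ℤ × g)) = 0 := rfl

@[simp] lemma wt_cons {g : Type*} (p : ℤ × g) (L : List (ℤ × g)) :
    wt (p :: L) = (2 - p.1) + wt L := by simp [wt]

@[simp] lemma wt_append {g : Type*} (A B : List (ℤ × g)) : wt (A ++ B) = wt A + wt B := by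
  simp [wt]

lemma pr_ofFn (s : ℕ) (idx : Fin s → ℤ) (a : Fin s → g) :
    pr 𝔽 (List.ofFn fun t => (idx t, a t)) =
      (List.ofFn fun t => UniversalEnvelopingAlgebra.ι 𝔽 (a t)).prod := by
  simp only [pr, List.map_ofFn]
  rfl

lemma wt_ofFn {g : Type*} (s : ℕ) (idx : Fin s → ℤ) (a : Fin s → g) :
    wt (List.ofFn fun t => (idx t, a t)) = ∑ t, (2 - idx t) := by
  simp [wt, List.map_ofFn, Function.comp, List.sum_ofFn]

lemma hom_ofFn (gr : ℤ → Submodule 𝔽 g) (s : ℕ) (idx : Fin s → ℤ) (a : Fin s → g)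
    (hhom : ∀ t, a t ∈ gr (idx t)) :
    ∀ p ∈ List.ofFn (fun t => (idx t, a t)), p.2 ∈ gr p.1 := by
  intro p hp
  rw [List.mem_ofFn] at hp
  obtain ⟨t, ht⟩ := hp
  rw [← ht]
  exact hhom t

lemma len_le_wt {g : Type*} : ∀ (L : List (ℤ × g)), (∀ p ∈ L, p.1 ≤ 1) → (L.length : ℤ) ≤ wt L
  | [], _ => by simp
  | p :: L, h => by
    have h1 := h p (List.mem_cons_self)
    have h2 := len_le_wt L (fun q hq => h q (List.mem_cons_of_mem _ hq))
    simp only [wt_cons, List.length_cons]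
    push_cast
    omega

lemma exists_split {α : Type*} : ∀ L : List (ℤ × α), (∃ p ∈ L, 2 ≤ p.1) →
    ∃ P k m L₂, L = P ++ (k, m) :: L₂ ∧ 2 ≤ k ∧ ∀ q ∈ L₂, q.1 ≤ 1 := by
  intro L
  induction L using List.reverseRecOn with
  | nil => rintro ⟨p, hp, -⟩; simp at hp
  | append_singleton L' q ihq =>
    intro hex
    by_cases hq : 2 ≤ q.1
    · exact ⟨L', q.1, q.2, [], by simp, hq, by simp⟩
    · obtain ⟨p, hp, hp2⟩ := hex
      have hpL' : p ∈ L' := by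
        rcases List.mem_append.mp hp with h | h
        · exact h
        · simp only [List.mem_singleton] at h; subst h; omega
      obtain ⟨P, k, m, L₂, hEq, hk, hle⟩ := ihq ⟨p, hpL', hp2⟩
      refine ⟨P, k, m, L₂ ++ [q], by simp [hEq], hk, ?_⟩
      intro r hr
      rcases List.mem_append.mp hr with h | h
      · exact hle r h
      · simp only [List.mem_singleton] at h; subst h; omega

lemma gen_mem (B : LinearMap.BilinForm 𝔽 g) (gr : ℤ → Submodule 𝔽 g) (f : g)
    (I : Ideal (UniversalEnvelopingAlgebra 𝔽 g))
    (hI : I = Ideal.span {x | ∃ m ∈ (⨆ k ≥ (2 : ℤ), gr k),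
      x = UniversalEnvelopingAlgebra.ι 𝔽 m - algebraMap 𝔽 _ (B f m)})
    (k : ℤ) (m : g) (hk : 2 ≤ k) (hm : m ∈ gr k) :
    UniversalEnvelopingAlgebra.ι 𝔽 m - algebraMap 𝔽 _ (B f m) ∈ I := by
  rw [hI]
  exact Ideal.subset_span ⟨m, Submodule.mem_iSup_of_mem k (Submodule.mem_iSup_of_mem hk hm), rfl⟩

attribute [local instance] LieRing.ofAssociativeRing LieAlgebra.ofAssociativeAlgebra in
lemma ι_comm (m b : g) : UniversalEnvelopingAlgebra.ι 𝔽 m * UniversalEnvelopingAlgebra.ι 𝔽 b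
    = UniversalEnvelopingAlgebra.ι 𝔽 b * UniversalEnvelopingAlgebra.ι 𝔽 m
      + UniversalEnvelopingAlgebra.ι 𝔽 ⁅m, b⁆ := by
  have h := (UniversalEnvelopingAlgebra.ι 𝔽).map_lie m b
  rw [Ring.lie_def] at h
  rw [h]; abel

/-- Key "straightening" step: move a factor `ι m` with `m ∈ gr k`, `k ≥ 2`, to the right
past the factors of `L₂` (all of degree ≤ 1), using the outer induction hypothesis `IH`
for the shorter monomials that appear (commutator terms and the monomial with the factor
removed). -/
lemma move (B : LinearMap.BilinForm 𝔽 g) (gr : ℤ → Submodule 𝔽 g)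
    (hbr : ∀ (d e : ℤ), ∀ x ∈ gr d, ∀ y ∈ gr e, ⁅x, y⁆ ∈ gr (d + e))
    (horth : ∀ (d e : ℤ), d + e ≠ 0 → ∀ x ∈ gr d, ∀ y ∈ gr e, B x y = 0)
    (f : g) (hf : f ∈ gr (-2))
    (I : Ideal (UniversalEnvelopingAlgebra 𝔽 g))
    (hI : I = Ideal.span {x | ∃ m ∈ (⨆ k ≥ (2 : ℤ), gr k),
      x = UniversalEnvelopingAlgebra.ι 𝔽 m - algebraMap 𝔽 _ (B f m)})
    (N : ℕ)
    (IH : ∀ L : List (ℤ × g), L.length < N → (∀ p ∈ L, p.2 ∈ gr p.1) → wt L ≤ 0 →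
      ∃ c : 𝔽, pr 𝔽 L - algebraMap 𝔽 _ c ∈ I ∧ (wt L < 0 → c = 0)) :
    ∀ (L₂ P : List (ℤ × g)) (k : ℤ) (m : g),
      (∀ p ∈ P, p.2 ∈ gr p.1) → (∀ p ∈ L₂, p.2 ∈ gr p.1) → (∀ q ∈ L₂, q.1 ≤ 1) →
      2 ≤ k → m ∈ gr k → P.length + 1 + L₂.length = N →
      wt P + (2 - k) + wt L₂ ≤ 0 →
      ∃ c : 𝔽, pr 𝔽 P * UniversalEnvelopingAlgebra.ι 𝔽 m * pr 𝔽 L₂ - algebraMap 𝔽 _ c ∈ I ∧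
        (wt P + (2 - k) + wt L₂ < 0 → c = 0) := by
  intro L₂
  induction L₂ with
  | nil =>
    intro P k m hP hL₂ hle hk hm hN hw
    simp only [wt_nil, add_zero, pr_nil, mul_one] at hw ⊢
    by_cases hk2 : k = 2
    · subst hk2
      simp only [sub_self, add_zero] at hw ⊢
      obtain ⟨c', hc', hc'0⟩ := IH P (by omega) hP hw
      refine ⟨B f m * c', ?_, fun h => by rw [hc'0 h, mul_zero]⟩
      have h1 : pr 𝔽 P * (UniversalEnvelopingAlgebra.ι 𝔽 m - algebraMap 𝔽 _ (B f m)) ∈ I :=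
        Ideal.mul_mem_left I _ (gen_mem B gr f I hI 2 m le_rfl hm)
      have h2 : algebraMap 𝔽 (UniversalEnvelopingAlgebra 𝔽 g) (B f m) *
          (pr 𝔽 P - algebraMap 𝔽 _ c') ∈ I := Ideal.mul_mem_left I _ hc'
      have key : pr 𝔽 P * UniversalEnvelopingAlgebra.ι 𝔽 m - algebraMap 𝔽 _ (B f m * c') =
          pr 𝔽 P * (UniversalEnvelopingAlgebra.ι 𝔽 m - algebraMap 𝔽 _ (B f m)) +
          algebraMap 𝔽 _ (B f m) * (pr 𝔽 P - algebraMap 𝔽 _ c') := by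
        rw [map_mul, mul_sub, mul_sub, ← Algebra.commutes (B f m) (pr 𝔽 P)]
        abel
      rw [key]
      exact I.add_mem h1 h2
    · have hc0 : B f m = 0 := horth (-2) k (by omega) f hf m hm
      refine ⟨0, ?_, fun _ => rfl⟩
      rw [map_zero, sub_zero]
      refine Ideal.mul_mem_left I _ ?_
      have := gen_mem B gr f I hI k m hk hm
      rwa [hc0, map_zero, sub_zero] at this
  | cons q L₂' ih =>
    intro P k m hP hL₂ hle hk hm hN hw
    obtain ⟨j, b⟩ := q
    have hb : b ∈ gr j := hL₂ (j, b) (List.mem_cons_self)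
    have hj : j ≤ 1 := hle (j, b) (List.mem_cons_self)
    simp only [wt_cons] at hw ⊢
    have hP' : ∀ p ∈ P ++ [(j, b)], p.2 ∈ gr p.1 := by
      intro p hp
      rcases List.mem_append.mp hp with h | h
      · exact hP p h
      · simp only [List.mem_singleton] at h; subst h; exact hb
    obtain ⟨c, hc, hc0⟩ := ih (P ++ [(j, b)]) k m hP'
      (fun p hp => hL₂ p (List.mem_cons_of_mem _ hp))
      (fun p hp => hle p (List.mem_cons_of_mem _ hp)) hk hm
      (by simp at hN ⊢; omega)
      (by simp only [wt_append, wt_cons, wt_nil]; omega)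
    have hbrm : ⁅m, b⁆ ∈ gr (k + j) := hbr k j m hm b hb
    have hhomC : ∀ p ∈ P ++ (k + j, ⁅m, b⁆) :: L₂', p.2 ∈ gr p.1 := by
      intro p hp
      rcases List.mem_append.mp hp with h | h
      · exact hP p h
      · rcases List.mem_cons.mp h with h | h
        · subst h; exact hbrm
        · exact hL₂ p (List.mem_cons_of_mem _ h)
    obtain ⟨c'', hcc, hcc0⟩ := IH (P ++ (k + j, ⁅m, b⁆) :: L₂')
      (by simp at hN ⊢; omega) hhomC
      (by simp only [wt_append, wt_cons]; omega)
    have hcc' : pr 𝔽 (P ++ (k + j, ⁅m, b⁆) :: L₂') ∈ I := by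
      have := hcc0 (by simp only [wt_append, wt_cons]; omega)
      rwa [this, map_zero, sub_zero] at hcc
    refine ⟨c, ?_, fun h => hc0 (by simp only [wt_append, wt_cons, wt_nil]; omega)⟩
    have heq : pr 𝔽 P * UniversalEnvelopingAlgebra.ι 𝔽 m * pr 𝔽 ((j, b) :: L₂') =
        pr 𝔽 (P ++ [(j, b)]) * UniversalEnvelopingAlgebra.ι 𝔽 m * pr 𝔽 L₂' +
        pr 𝔽 (P ++ (k + j, ⁅m, b⁆) :: L₂') := by
      simp only [pr_cons, pr_append, pr_nil, mul_one]
      rw [mul_assoc (pr 𝔽 P) _ _, ← mul_assoc (UniversalEnvelopingAlgebra.ι 𝔽 m) _ _,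
        ι_comm m b]
      noncomm_ring
    rw [heq, add_sub_right_comm]
    exact I.add_mem hc hcc'

/-- Main lemma: any monomial of homogeneous factors of Kazhdan weight ≤ 0 is congruent
modulo `I` to a scalar, which vanishes if the weight is < 0. -/
lemma main (B : LinearMap.BilinForm 𝔽 g) (gr : ℤ → Submodule 𝔽 g)
    (hbr : ∀ (d e : ℤ), ∀ x ∈ gr d, ∀ y ∈ gr e, ⁅x, y⁆ ∈ gr (d + e))
    (horth : ∀ (d e : ℤ), d + e ≠ 0 → ∀ x ∈ gr d, ∀ y ∈ gr e, B x y = 0)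
    (f : g) (hf : f ∈ gr (-2))
    (I : Ideal (UniversalEnvelopingAlgebra 𝔽 g))
    (hI : I = Ideal.span {x | ∃ m ∈ (⨆ k ≥ (2 : ℤ), gr k),
      x = UniversalEnvelopingAlgebra.ι 𝔽 m - algebraMap 𝔽 _ (B f m)}) :
    ∀ (n : ℕ) (L : List (ℤ × g)), L.length = n → (∀ p ∈ L, p.2 ∈ gr p.1) → wt L ≤ 0 →
      ∃ c : 𝔽, pr 𝔽 L - algebraMap 𝔽 _ c ∈ I ∧ (wt L < 0 → c = 0) := by
  intro n
  induction n using Nat.strong_induction_on with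
  | _ n IH =>
    intro L hlen hhom hw
    by_cases hall : ∀ p ∈ L, p.1 ≤ 1
    · have hlw := len_le_wt L hall
      have hL0 : L.length = 0 := by omega
      obtain rfl : L = [] := List.length_eq_zero_iff.mp hL0
      exact ⟨1, by simp, by simp⟩
    · push_neg at hall
      obtain ⟨p, hp, hp2⟩ := hall
      obtain ⟨P, k, m, L₂, hEq, hk, hle⟩ := exists_split L ⟨p, hp, by omega⟩
      subst hEq
      have hN : P.length + 1 + L₂.length = n := by
        simp only [List.length_append, List.length_cons] at hlen; omega
      have hIH : ∀ L' : List (ℤ × g), L'.length < n → (∀ p ∈ L', p.2 ∈ gr p.1) → wt L' ≤ 0 →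
          ∃ c : 𝔽, pr 𝔽 L' - algebraMap 𝔽 _ c ∈ I ∧ (wt L' < 0 → c = 0) :=
        fun L' h1 h2 h3 => IH L'.length h1 L' rfl h2 h3
      have hP : ∀ q ∈ P, q.2 ∈ gr q.1 := fun q hq => hhom q (List.mem_append_left _ hq)
      have hm : m ∈ gr k := hhom (k, m) (List.mem_append_right _ (List.mem_cons_self))
      have hL₂ : ∀ q ∈ L₂, q.2 ∈ gr q.1 :=
        fun q hq => hhom q (List.mem_append_right _ (List.mem_cons_of_mem _ hq))
      have hw' : wt P + (2 - k) + wt L₂ ≤ 0 := by simp only [wt_append, wt_cons] at hw; omega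
      obtain ⟨c, hc, hc0⟩ := move B gr hbr horth f hf I hI n hIH L₂ P k m hP hL₂ hle hk hm hN hw'
      refine ⟨c, ?_, fun h => hc0 (by simp only [wt_append, wt_cons] at h; omega)⟩
      have : pr 𝔽 (P ++ (k, m) :: L₂) =
          pr 𝔽 P * UniversalEnvelopingAlgebra.ι 𝔽 m * pr 𝔽 L₂ := by
        simp [mul_assoc]
      rwa [this]

end Stmt12Aux

/- General finite W-algebra setup: `g` is a Lie algebra over a field `𝔽` of characteristic 0,
with a nondegenerate symmetric invariant bilinear form `B` and a `½ℤ`-grading encoded by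
`gr : ℤ → Submodule 𝔽 g` (`gr d` is the component `g_{d/2}`); `f ∈ g_{−1} = gr (−2)`; `I` is
the left ideal of `U(g)` generated by `{m − (f|m) : m ∈ g_{≥1}}` with `g_{≥1} = ⨆ k ≥ 2, gr k`.
The Kazhdan filtration is encoded by `F : ℤ → Submodule 𝔽 U(g)`, where `F d` is the piece
`F_{d/2}U(g)`: the span of all products `ι(a₁)⋯ι(a_s)` with `a_t ∈ g_{j_t}` homogeneous
(doubled degree `idx t`, i.e. `j_t = (idx t)/2`) and `Σ_t (1 − j_t) ≤ d/2`, i.e.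
`Σ_t (2 − idx t) ≤ d`. -/

/-- (a) for every `Δ < 0`, `F_Δ U(g) ⊆ I` (so `F_Δ U(g) = F_Δ I`);
(b) `F₀U(g) = 𝔽·1 + F₀I`: every `x ∈ F₀U(g)` is of the form `c·1 + i` with `c ∈ 𝔽` and
`i ∈ F₀I = F₀U(g) ∩ I`; and the sum is direct provided `I ≠ U(g)`: no nonzero scalar lies
in `I`. -/
theorem stmt_12 {𝔽 : Type*} [Field 𝔽] [CharZero 𝔽]
    {g : Type*} [LieRing g] [LieAlgebra 𝔽 g]
    (B : LinearMap.BilinForm 𝔽 g)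
    (hsymm : ∀ x y : g, B x y = B y x)
    (hinvar : ∀ x y z : g, B ⁅x, y⁆ z = B x ⁅y, z⁆)
    (hnondeg : ∀ x : g, (∀ y : g, B x y = 0) → x = 0)
    (gr : ℤ → Submodule 𝔽 g)
    (hds : DirectSum.IsInternal gr)
    (hbr : ∀ (d e : ℤ), ∀ x ∈ gr d, ∀ y ∈ gr e, ⁅x, y⁆ ∈ gr (d + e))
    (horth : ∀ (d e : ℤ), d + e ≠ 0 → ∀ x ∈ gr d, ∀ y ∈ gr e, B x y = 0)
    (f : g) (hf : f ∈ gr (-2))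
    (I : Ideal (UniversalEnvelopingAlgebra 𝔽 g))
    (hI : I = Ideal.span {x | ∃ m ∈ (⨆ k ≥ (2 : ℤ), gr k),
      x = UniversalEnvelopingAlgebra.ι 𝔽 m - algebraMap 𝔽 _ (B f m)})
    (F : ℤ → Submodule 𝔽 (UniversalEnvelopingAlgebra 𝔽 g))
    (hF : ∀ d : ℤ, F d = Submodule.span 𝔽
      {x | ∃ (s : ℕ) (idx : Fin s → ℤ) (a : Fin s → g),
        (∀ t, a t ∈ gr (idx t)) ∧ (∑ t, (2 - idx t)) ≤ d ∧
        x = (List.ofFn fun t => UniversalEnvelopingAlgebra.ι 𝔽 (a t)).prod}) :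
    (∀ d : ℤ, d < 0 → ∀ x ∈ F d, x ∈ I) ∧
    (∀ x ∈ F 0, ∃ c : 𝔽,
      x - algebraMap 𝔽 (UniversalEnvelopingAlgebra 𝔽 g) c ∈ F 0 ∧
      x - algebraMap 𝔽 (UniversalEnvelopingAlgebra 𝔽 g) c ∈ I) ∧
    (I ≠ ⊤ → ∀ c : 𝔽, algebraMap 𝔽 (UniversalEnvelopingAlgebra 𝔽 g) c ∈ I → c = 0) := by
  have hmain := Stmt12Aux.main B gr hbr horth f hf I hI
  refine ⟨?_, ?_, ?_⟩
  · -- (a)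
    intro d hd x hx
    rw [hF d] at hx
    have hle : Submodule.span 𝔽
        {x | ∃ (s : ℕ) (idx : Fin s → ℤ) (a : Fin s → g),
          (∀ t, a t ∈ gr (idx t)) ∧ (∑ t, (2 - idx t)) ≤ d ∧
          x = (List.ofFn fun t => UniversalEnvelopingAlgebra.ι 𝔽 (a t)).prod} ≤
        I.restrictScalars 𝔽 := by
      refine Submodule.span_le.mpr ?_
      rintro y ⟨s, idx, a, hhom, hsum, rfl⟩
      set L : List (ℤ × g) := List.ofFn (fun t => (idx t, a t)) with hL
      have hwt : Stmt12Aux.wt L = ∑ t, (2 - idx t) := Stmt12Aux.wt_ofFn s idx a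
      obtain ⟨c, hc, hc0⟩ := hmain L.length L rfl (Stmt12Aux.hom_ofFn gr s idx a hhom)
        (by rw [hwt]; omega)
      rw [hc0 (by rw [hwt]; omega), map_zero, sub_zero, Stmt12Aux.pr_ofFn] at hc
      exact hc
    exact hle hx
  · -- (b)
    intro x hx
    have h1F : (1 : UniversalEnvelopingAlgebra 𝔽 g) ∈ F 0 := by
      rw [hF 0]
      exact Submodule.subset_span ⟨0, Fin.elim0, Fin.elim0, fun t => t.elim0, by simp, by simp⟩
    have hxP : x ∈ (Submodule.span 𝔽 {(1 : UniversalEnvelopingAlgebra 𝔽 g)} ⊔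
        I.restrictScalars 𝔽) := by
      rw [hF 0] at hx
      refine Submodule.span_le.mpr ?_ hx
      rintro y ⟨s, idx, a, hhom, hsum, rfl⟩
      set L : List (ℤ × g) := List.ofFn (fun t => (idx t, a t)) with hL
      have hwt : Stmt12Aux.wt L = ∑ t, (2 - idx t) := Stmt12Aux.wt_ofFn s idx a
      obtain ⟨c, hc, -⟩ := hmain L.length L rfl (Stmt12Aux.hom_ofFn gr s idx a hhom)
        (by rw [hwt]; omega)
      rw [Stmt12Aux.pr_ofFn] at hc
      have hdecomp : (List.ofFn fun t => UniversalEnvelopingAlgebra.ι 𝔽 (a t)).prod =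
          algebraMap 𝔽 _ c +
          ((List.ofFn fun t => UniversalEnvelopingAlgebra.ι 𝔽 (a t)).prod - algebraMap 𝔽 _ c) :=
        (add_sub_cancel _ _).symm
      rw [hdecomp]
      refine Submodule.add_mem _ (Submodule.mem_sup_left ?_) (Submodule.mem_sup_right hc)
      rw [Algebra.algebraMap_eq_smul_one]
      exact Submodule.smul_mem _ c (Submodule.mem_span_singleton_self 1)
    obtain ⟨y, hy, z, hz, hxyz⟩ := Submodule.mem_sup.mp hxP
    obtain ⟨c, rfl⟩ := Submodule.mem_span_singleton.mp hy
    refine ⟨c, ?_, ?_⟩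
    · refine Submodule.sub_mem _ hx ?_
      rw [Algebra.algebraMap_eq_smul_one]
      exact Submodule.smul_mem _ c h1F
    · have hzeq : x - algebraMap 𝔽 _ c = z := by
        rw [← hxyz, Algebra.algebraMap_eq_smul_one]
        abel
      rw [hzeq]
      exact hz
  · -- (c)
    intro hne c hc
    by_contra h0
    apply hne
    rw [Ideal.eq_top_iff_one]
    have h := Ideal.mul_mem_left I (algebraMap 𝔽 _ c⁻¹) hc
    rwa [← map_mul, inv_mul_cancel₀ h0, map_one] at h
end

section
/- Let g, f, I be as in the general finite W-algebra setup with Kazhdan filtration F_ΔU(g) and F₀I = F₀U(g) ∩ I. If a₁, …, a_ℓ ∈ g are homogeneous, a_t ∈ g_{j_t}, with Σ_{t=1}^ℓ (1 − j_t) ≤ 0, then a₁⋯a_ℓ − (f|a₁)(f|a₂)⋯(f|a_ℓ)·1 ∈ F₀I. (Equivalently, the character ε₀ : F₀U(g) = 𝔽·1 ⊕ F₀I → 𝔽 satisfies ε₀(Σ a₁⋯a_ℓ) = Σ (f|a₁)⋯(f|a_ℓ).) -/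
theorem key13 {𝔽 : Type*} [Field 𝔽] {g : Type*} [LieRing g] [LieAlgebra 𝔽 g]
    (B : LinearMap.BilinForm 𝔽 g) (gr : ℤ → Submodule 𝔽 g) (f : g)
    (I : Ideal (UniversalEnvelopingAlgebra 𝔽 g))
    (hbr : ∀ (d e : ℤ), ∀ x ∈ gr d, ∀ y ∈ gr e, ⁅x, y⁆ ∈ gr (d + e))
    (hBf : ∀ (d : ℤ) (x : g), x ∈ gr d → d ≠ 2 → B f x = 0)
    (hgen : ∀ (k : ℤ) (m : g), 2 ≤ k → m ∈ gr k →
      UniversalEnvelopingAlgebra.ι 𝔽 m - algebraMap 𝔽 _ (B f m) ∈ I) :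
    ∀ (n : ℕ) (l : List (ℤ × g)), l.length = n → (∀ p ∈ l, p.2 ∈ gr p.1) →
      ((l.map fun p => 2 - p.1).sum ≤ 0) →
      (l.map fun p => UniversalEnvelopingAlgebra.ι 𝔽 p.2).prod -
        algebraMap 𝔽 _ ((l.map fun p => B f p.2).prod) ∈ I := by
  intro n
  induction n using Nat.strong_induction_on with
  | _ n IH =>
  -- helper: if some entry has degree ≠ 2, the scalar product vanishes
  have hPB : ∀ l : List (ℤ × g), (∀ p ∈ l, p.2 ∈ gr p.1) → (∃ p ∈ l, p.1 ≠ 2) →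
      (l.map fun p => B f p.2).prod = 0 := by
    intro l hm ⟨p, hp, hp2⟩
    apply List.prod_eq_zero
    simp only [List.mem_map]
    exact ⟨p, hp, hBf p.1 p.2 (hm p hp) hp2⟩
  -- inner induction
  have inner : ∀ (l₂ l₁ : List (ℤ × g)) (p : ℤ × g), (l₁ ++ p :: l₂).length = n →
      (2 : ℤ) ≤ p.1 → (∀ q ∈ l₁ ++ p :: l₂, q.2 ∈ gr q.1) →
      (((l₁ ++ p :: l₂).map fun q => 2 - q.1).sum ≤ 0) →
      ((l₁ ++ p :: l₂).map fun q => UniversalEnvelopingAlgebra.ι 𝔽 q.2).prod -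
        algebraMap 𝔽 _ (((l₁ ++ p :: l₂).map fun q => B f q.2).prod) ∈ I := by
    intro l₂
    induction l₂ with
    | nil =>
      intro l₁ p hlen hp2 hmem hsum
      have hgmem : p.2 ∈ gr p.1 := hmem p (by simp)
      set c := B f p.2 with hc
      have key : ((l₁ ++ [p]).map fun q => UniversalEnvelopingAlgebra.ι 𝔽 q.2).prod -
          algebraMap 𝔽 _ (((l₁ ++ [p]).map fun q => B f q.2).prod)
          = (l₁.map fun q => UniversalEnvelopingAlgebra.ι 𝔽 q.2).prod *
              (UniversalEnvelopingAlgebra.ι 𝔽 p.2 - algebraMap 𝔽 _ c)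
            + c • ((l₁.map fun q => UniversalEnvelopingAlgebra.ι 𝔽 q.2).prod -
              algebraMap 𝔽 _ ((l₁.map fun q => B f q.2).prod)) := by
        simp only [List.map_append, List.prod_append, List.map_cons, List.map_nil,
          List.prod_cons, List.prod_nil, mul_one, map_mul, smul_sub, mul_sub,
          Algebra.smul_def]
        rw [Algebra.commutes c ((l₁.map fun q => UniversalEnvelopingAlgebra.ι 𝔽 q.2).prod),
          ← map_mul, ← map_mul, mul_comm c]
        abel
      rw [key]
      apply add_mem
      · rw [← smul_eq_mul]
        exact I.smul_mem _ (hgen p.1 p.2 hp2 hgmem)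
      · rcases eq_or_ne c 0 with h0 | h0
        · rw [h0, zero_smul]; exact I.zero_mem
        · have hp2' : p.1 = 2 := by
            by_contra h
            exact h0 (hBf p.1 p.2 hgmem h)
          have hsum1 : (l₁.map fun q => (2 : ℤ) - q.1).sum ≤ 0 := by
            simp only [List.map_append, List.sum_append, List.map_cons, List.map_nil,
              List.sum_cons, List.sum_nil, hp2'] at hsum ⊢
            omega
          have hlen1 : l₁.length < n := by
            simp at hlen; omega
          rw [Algebra.smul_def, ← smul_eq_mul]
          exact I.smul_mem _ (IH _ hlen1 l₁ rfl (fun q hq => hmem q (by simp [hq])) hsum1)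
    | cons q l₂' ih =>
      intro l₁ p hlen hp2 hmem hsum
      -- swap p and q
      have hswap : ((l₁ ++ p :: q :: l₂').map fun r => UniversalEnvelopingAlgebra.ι 𝔽 r.2).prod -
          algebraMap 𝔽 _ (((l₁ ++ p :: q :: l₂').map fun r => B f r.2).prod)
          = (((l₁ ++ [q]) ++ p :: l₂').map fun r => UniversalEnvelopingAlgebra.ι 𝔽 r.2).prod -
              algebraMap 𝔽 _ ((((l₁ ++ [q]) ++ p :: l₂').map fun r => B f r.2).prod)
            + ((l₁ ++ (p.1 + q.1, ⁅p.2, q.2⁆) :: l₂').map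
                fun r => UniversalEnvelopingAlgebra.ι 𝔽 r.2).prod := by
        have hlie : UniversalEnvelopingAlgebra.ι 𝔽 ⁅p.2, q.2⁆ =
            UniversalEnvelopingAlgebra.ι 𝔽 p.2 * UniversalEnvelopingAlgebra.ι 𝔽 q.2 -
            UniversalEnvelopingAlgebra.ι 𝔽 q.2 * UniversalEnvelopingAlgebra.ι 𝔽 p.2 := by
          letI : LieRing (UniversalEnvelopingAlgebra 𝔽 g) := LieRing.ofAssociativeRing
          letI : LieAlgebra 𝔽 (UniversalEnvelopingAlgebra 𝔽 g) := LieAlgebra.ofAssociativeAlgebra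
          rw [LieHom.map_lie, Ring.lie_def]
        simp only [List.map_append, List.prod_append, List.map_cons, List.map_nil,
          List.prod_cons, List.prod_nil, mul_one, one_mul]
        have hsc : (l₁.map fun r => B f r.2).prod * (B f p.2 * (B f q.2 *
              (l₂'.map fun r => B f r.2).prod))
            = (l₁.map fun r => B f r.2).prod * B f q.2 * (B f p.2 *
              (l₂'.map fun r => B f r.2).prod) := by ring
        rw [hsc, hlie]
        noncomm_ring
      rw [hswap]
      apply add_mem
      · exact ih (l₁ ++ [q]) p (by simpa using by simp at hlen ⊢; omega) hp2
          (fun r hr => hmem r (by simp at hr ⊢; tauto))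
          (by simp only [List.map_append, List.sum_append, List.map_cons, List.sum_cons,
                List.map_nil, List.sum_nil] at hsum ⊢; omega)
      · -- bracket term
        set lb := l₁ ++ (p.1 + q.1, ⁅p.2, q.2⁆) :: l₂' with hlb
        have hmemb : ∀ r ∈ lb, r.2 ∈ gr r.1 := by
          intro r hr
          rw [hlb] at hr
          rcases List.mem_append.mp hr with h | h
          · exact hmem r (by simp [h])
          · rcases List.mem_cons.mp h with h | h
            · subst h
              exact hbr p.1 q.1 p.2 (hmem p (by simp)) q.2 (hmem q (by simp))
            · exact hmem r (by simp [h])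
        have hsumb : (lb.map fun r => (2 : ℤ) - r.1).sum ≤ -2 := by
          rw [hlb]
          simp only [List.map_append, List.sum_append, List.map_cons, List.sum_cons] at hsum ⊢
          omega
        have hlenb : lb.length < n := by
          rw [hlb]; simp at hlen ⊢; omega
        have hzero : (lb.map fun r => B f r.2).prod = 0 := by
          apply hPB lb hmemb
          by_contra h
          push_neg at h
          have : (lb.map fun r => (2 : ℤ) - r.1).sum = 0 := by
            rw [List.sum_eq_zero]
            intro x hx
            simp only [List.mem_map] at hx
            obtain ⟨r, hr, rfl⟩ := hx
            have := h r hr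
            omega
          omega
        have := IH lb.length hlenb lb rfl hmemb (by omega)
        rwa [hzero, map_zero, sub_zero] at this
  -- main step
  intro l hlen hmem hsum
  rcases l with _ | ⟨p, l'⟩
  · simp only [List.map_nil, List.prod_nil, map_one, sub_self]
    exact I.zero_mem
  · have hex : ∃ r ∈ p :: l', (2 : ℤ) ≤ r.1 := by
      by_contra h
      push_neg at h
      have hge : ∀ x ∈ ((p :: l').map fun q => (2 : ℤ) - q.1), 1 ≤ x := by
        intro x hx
        simp only [List.mem_map] at hx
        obtain ⟨r, hr, rfl⟩ := hx
        have := h r hr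
        omega
      have hlensum : ∀ (L : List ℤ), (∀ x ∈ L, (1:ℤ) ≤ x) → (L.length : ℤ) ≤ L.sum := by
        intro L
        induction L with
        | nil => simp
        | cons x L ihL =>
          intro hL
          simp only [List.length_cons, List.sum_cons, Nat.cast_add, Nat.cast_one]
          have := hL x (by simp)
          have := ihL (fun y hy => hL y (by simp [hy]))
          omega
      have := hlensum _ hge
      rw [List.length_map, List.length_cons] at this
      push_cast at this
      omega
    obtain ⟨r, hr, hr2⟩ := hex
    obtain ⟨l₁, l₂, hdecomp⟩ := List.append_of_mem hr
    rw [hdecomp] at hlen hmem hsum ⊢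
    exact inner l₂ l₁ r hlen hr2 hmem hsum




/- General finite W-algebra setup: `g` is a Lie algebra over a field `𝔽` of characteristic 0,
with a nondegenerate symmetric invariant bilinear form `B` and a `½ℤ`-grading encoded by
`gr : ℤ → Submodule 𝔽 g` (`gr d` is the component `g_{d/2}`); `f ∈ g_{−1} = gr (−2)`; `I` is
the left ideal of `U(g)` generated by `{m − (f|m) : m ∈ g_{≥1}}` with `g_{≥1} = ⨆ k ≥ 2, gr k`.
The Kazhdan filtration is encoded by `F : ℤ → Submodule 𝔽 U(g)`, where `F d = F_{d/2}U(g)` is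
the span of products `ι(a₁)⋯ι(a_s)` with `a_t` homogeneous of doubled degree `idx t` and
`Σ_t (2 − idx t) ≤ d`. -/

/-- If `a₁, …, a_ℓ ∈ g` are homogeneous, `a_t ∈ g_{j_t}` (doubled degree `idx t`),
with `Σ_t (1 − j_t) ≤ 0` (i.e. `Σ_t (2 − idx t) ≤ 0`), then
`a₁⋯a_ℓ − (f|a₁)(f|a₂)⋯(f|a_ℓ)·1 ∈ F₀I = F₀U(g) ∩ I`. -/
theorem stmt_13 {𝔽 : Type*} [Field 𝔽] [CharZero 𝔽]
    {g : Type*} [LieRing g] [LieAlgebra 𝔽 g]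
    (B : LinearMap.BilinForm 𝔽 g)
    (hsymm : ∀ x y : g, B x y = B y x)
    (hinvar : ∀ x y z : g, B ⁅x, y⁆ z = B x ⁅y, z⁆)
    (hnondeg : ∀ x : g, (∀ y : g, B x y = 0) → x = 0)
    (gr : ℤ → Submodule 𝔽 g)
    (hds : DirectSum.IsInternal gr)
    (hbr : ∀ (d e : ℤ), ∀ x ∈ gr d, ∀ y ∈ gr e, ⁅x, y⁆ ∈ gr (d + e))
    (horth : ∀ (d e : ℤ), d + e ≠ 0 → ∀ x ∈ gr d, ∀ y ∈ gr e, B x y = 0)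
    (f : g) (hf : f ∈ gr (-2))
    (I : Ideal (UniversalEnvelopingAlgebra 𝔽 g))
    (hI : I = Ideal.span {x | ∃ m ∈ (⨆ k ≥ (2 : ℤ), gr k),
      x = UniversalEnvelopingAlgebra.ι 𝔽 m - algebraMap 𝔽 _ (B f m)})
    (F : ℤ → Submodule 𝔽 (UniversalEnvelopingAlgebra 𝔽 g))
    (hF : ∀ d : ℤ, F d = Submodule.span 𝔽
      {x | ∃ (s : ℕ) (idx : Fin s → ℤ) (a : Fin s → g),
        (∀ t, a t ∈ gr (idx t)) ∧ (∑ t, (2 - idx t)) ≤ d ∧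
        x = (List.ofFn fun t => UniversalEnvelopingAlgebra.ι 𝔽 (a t)).prod})
    (ℓ : ℕ) (idx : Fin ℓ → ℤ) (a : Fin ℓ → g)
    (ha : ∀ t, a t ∈ gr (idx t))
    (hdeg : (∑ t, (2 - idx t)) ≤ 0) :
    (List.ofFn fun t => UniversalEnvelopingAlgebra.ι 𝔽 (a t)).prod -
        algebraMap 𝔽 (UniversalEnvelopingAlgebra 𝔽 g) (∏ t, B f (a t)) ∈ F 0 ∧
    (List.ofFn fun t => UniversalEnvelopingAlgebra.ι 𝔽 (a t)).prod -
        algebraMap 𝔽 (UniversalEnvelopingAlgebra 𝔽 g) (∏ t, B f (a t)) ∈ I := by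
  -- derived hypotheses
  have hBf : ∀ (d : ℤ) (x : g), x ∈ gr d → d ≠ 2 → B f x = 0 := by
    intro d x hx hd
    exact horth (-2) d (by omega) f hf x hx
  have hgen : ∀ (k : ℤ) (m : g), 2 ≤ k → m ∈ gr k →
      UniversalEnvelopingAlgebra.ι 𝔽 m - algebraMap 𝔽 _ (B f m) ∈ I := by
    intro k m hk hm
    rw [hI]
    exact Ideal.subset_span ⟨m, Submodule.mem_iSup_of_mem k
      (Submodule.mem_iSup_of_mem hk hm), rfl⟩
  set l : List (ℤ × g) := List.ofFn (fun t => (idx t, a t)) with hl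
  have hconv1 : (List.ofFn fun t => UniversalEnvelopingAlgebra.ι 𝔽 (a t))
      = l.map (fun p => UniversalEnvelopingAlgebra.ι 𝔽 p.2) := by
    rw [hl, List.map_ofFn]; rfl
  have hconv2 : (∏ t, B f (a t)) = (l.map fun p => B f p.2).prod := by
    rw [hl, List.map_ofFn, List.prod_ofFn]; rfl
  have hconv3 : (l.map fun p => (2 : ℤ) - p.1).sum = ∑ t, (2 - idx t) := by
    rw [hl, List.map_ofFn, List.sum_ofFn]; rfl
  have hmeml : ∀ p ∈ l, p.2 ∈ gr p.1 := by
    intro p hp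
    rw [hl, List.mem_ofFn] at hp
    obtain ⟨t, rfl⟩ := hp
    exact ha t
  constructor
  · -- membership in F 0
    rw [hF 0]
    apply sub_mem
    · exact Submodule.subset_span ⟨ℓ, idx, a, ha, hdeg, rfl⟩
    · have h1 : (1 : UniversalEnvelopingAlgebra 𝔽 g) ∈ Submodule.span 𝔽
          {x | ∃ (s : ℕ) (idx : Fin s → ℤ) (a : Fin s → g),
            (∀ t, a t ∈ gr (idx t)) ∧ (∑ t, (2 - idx t)) ≤ (0 : ℤ) ∧
            x = (List.ofFn fun t => UniversalEnvelopingAlgebra.ι 𝔽 (a t)).prod} :=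
        Submodule.subset_span ⟨0, (fun t => t.elim0), (fun t => t.elim0),
          (fun t => t.elim0), by simp, by simp⟩
      rw [Algebra.algebraMap_eq_smul_one]
      exact Submodule.smul_mem _ _ h1
  · -- membership in I
    have := key13 B gr f I hbr hBf hgen ℓ l (by simp [hl]) hmeml (by rw [hconv3]; exact hdeg)
    rw [hconv1, hconv2]
    exact this
end
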